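/- arXiv:math/0212030 — 5 statements merged into one kernel-verified Lean document; each statement's English description precedes it below -/
import Mathlib

section
/- Let V = V₀ ⊕ V₁ ⊕ V₂ with each component one-dimensional, spanned by v, w, x respectively, with skew-symmetric operators lₙ of degree 2−n determined by constants aₙ, bₙ, cₙ via lₙ(v⊗w^{⊗(n−1)}) = aₙw, lₙ(w^{⊗n}) = bₙx, lₙ(v⊗w^{⊗(n−2)}⊗x) = cₙx (with c₁ = 0), all other values on basis tensors being zero. Then the n-th generalized Jacobi expression Jₙ vanishes identically if and only if Jₙ(v ⊗ w^{⊗(n−1)}) = 0. -/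
open Finset Equiv

/-- Sign `(-1)^z` for an integer `z`, valued in a field. -/
def ksign (K : Type*) [Field K] (z : ℤ) : K := if Even z then 1 else -1

/-- The Koszul sign `χ(σ)` of a permutation acting on a list of basis elements
with degrees given by `d`. -/
def chi (K : Type*) [Field K] (d : Fin 3 → ℤ) (xs : List (Fin 3))
    (σ : Perm (Fin xs.length)) : K :=
  ((Perm.sign σ : ℤ) : K) *
    ∏ p ∈ Finset.univ.filter
      (fun p : Fin xs.length × Fin xs.length => p.1 < p.2 ∧ σ p.2 < σ p.1),
      ksign K (d (xs.get (σ p.1)) * d (xs.get (σ p.2)))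

/-- `(p, n-p)`-unshuffles in `S_n`. -/
def unshuffles (p n : ℕ) : Finset (Perm (Fin n)) :=
  Finset.univ.filter (fun σ =>
    (∀ i j : Fin n, i < j → (j : ℕ) < p → σ i < σ j) ∧
    (∀ i j : Fin n, p ≤ (i : ℕ) → i < j → σ i < σ j))

/-- The Koszul sign picked up when sorting a list of basis elements into
canonical (increasing) order; degrees given by `d`. -/
def sortSign (K : Type*) [Field K] (d : Fin 3 → ℤ) (xs : List (Fin 3)) : K :=
  ∏ p ∈ Finset.univ.filter
    (fun p : Fin xs.length × Fin xs.length => p.1 < p.2 ∧ xs.get p.2 < xs.get p.1),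
    (-(ksign K (d (xs.get p.1) * d (xs.get p.2))))

/-- The generalized Jacobi expression `Jₙ = Σ_p (-1)^{p(n-p)} l_{n-p+1} ∘ l_p`,
evaluated on a basis tensor `xs` (so `n = xs.length`), where `ell` gives the
value of each `l_m` on basis tensors (as a coordinate vector in `Fin 3 → K`),
extended by unshuffles with Koszul signs. -/
def Jac (K : Type*) [Field K] (d : Fin 3 → ℤ) (ell : List (Fin 3) → (Fin 3 → K))
    (xs : List (Fin 3)) : Fin 3 → K :=
  ∑ p ∈ Finset.Icc 1 xs.length, ((-1 : K) ^ (p * (xs.length - p))) •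
    ∑ σ ∈ unshuffles p xs.length,
      chi K d xs σ •
        (fun j : Fin 3 => ∑ i : Fin 3,
          ell ((List.ofFn (fun t => xs.get (σ t))).take p) i *
          ell (i :: (List.ofFn (fun t => xs.get (σ t))).drop p) j)

/-- The operators on `V₀ ⊕ V₁ ⊕ V₂` (basis `v = 0, w = 1, x = 2`) determined by
constants `a, b, c`:  `lₙ(v⊗w^{n-1}) = aₙ w`, `lₙ(w^n) = bₙ x`,
`lₙ(v⊗w^{n-2}⊗x) = cₙ x`, all other values zero, extended skew-symmetrically. -/
def ell012 {K : Type*} [Field K] (a b c : ℕ → K) (xs : List (Fin 3)) : Fin 3 → K :=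
  sortSign K ![0, 1, 2] xs •
    (if xs.count 0 = 1 ∧ xs.count 2 = 0 then
        (fun j : Fin 3 => if j = 1 then a xs.length else 0)
      else if xs.count 0 = 0 ∧ xs.count 2 = 0 then
        (fun j : Fin 3 => if j = 2 then b xs.length else 0)
      else if xs.count 0 = 1 ∧ xs.count 2 = 1 then
        (fun j : Fin 3 => if j = 2 then c xs.length else 0)
      else 0)

namespace JacAux

variable {K : Type*} [Field K]

/-- The only odd degree among `0,1,2` is that of `w = 1`, so the Koszul factor is
`-1` iff both entries are `1`. -/
def kk (K : Type*) [Field K] (x y : Fin 3) : K := if x = 1 ∧ y = 1 then -1 else 1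

lemma kk_symm (x y : Fin 3) : kk K x y = kk K y x := by
  unfold kk; by_cases h : x = 1 <;> by_cases h' : y = 1 <;> simp [h, h']

lemma kk_mul_self (x y : Fin 3) : kk K x y * kk K x y = 1 := by
  unfold kk; split_ifs <;> ring

lemma kk_ne_zero (x y : Fin 3) : kk K x y ≠ 0 := by
  unfold kk; split_ifs <;> simp

lemma neg_kk_mul_self (x y : Fin 3) : (-(kk K x y)) * (-(kk K x y)) = 1 := by
  rw [neg_mul_neg]; exact kk_mul_self x y

lemma neg_kk_ne_zero (x y : Fin 3) : (-(kk K x y)) ≠ 0 := by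
  simpa using kk_ne_zero (K := K) x y

lemma ksign_eq (x y : Fin 3) : ksign K (![(0:ℤ),1,2] x * ![(0:ℤ),1,2] y) = kk K x y := by
  fin_cases x <;> fin_cases y <;>
    simp only [ksign, kk, Matrix.cons_val_zero, Matrix.cons_val_one, Matrix.head_cons,
      Matrix.cons_val_two, Matrix.tail_cons, Fin.mk_one] <;> norm_num [Int.even_iff] <;>
    simp [Fin.ext_iff]

end JacAux
namespace JacAux

variable {K : Type*} [Field K]

/-- Function version of `chi` (matches `chi` definitionally when `g = xs.get`). -/
def chiF (K : Type*) [Field K] (d : Fin 3 → ℤ) (n : ℕ) (g : Fin n → Fin 3)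
    (σ : Perm (Fin n)) : K :=
  ((Perm.sign σ : ℤ) : K) *
    ∏ p ∈ Finset.univ.filter
      (fun p : Fin n × Fin n => p.1 < p.2 ∧ σ p.2 < σ p.1),
      ksign K (d (g (σ p.1)) * d (g (σ p.2)))

lemma chi_eq_chiF (xs : List (Fin 3)) (d : Fin 3 → ℤ) (σ : Perm (Fin xs.length)) :
    chi K d xs σ = chiF K d xs.length xs.get σ := rfl

/-- Function version of `sortSign`. -/
def ssF (K : Type*) [Field K] (d : Fin 3 → ℤ) (n : ℕ) (g : Fin n → Fin 3) : K :=
  ∏ p ∈ Finset.univ.filter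
    (fun p : Fin n × Fin n => p.1 < p.2 ∧ g p.2 < g p.1),
    (-(ksign K (d (g p.1) * d (g p.2))))

lemma sortSign_eq_ssF (xs : List (Fin 3)) (d : Fin 3 → ℤ) :
    sortSign K d xs = ssF K d xs.length xs.get := rfl

/-- Function version of `Jac`. -/
def JacF (K : Type*) [Field K] (d : Fin 3 → ℤ) (ell : List (Fin 3) → (Fin 3 → K))
    (n : ℕ) (g : Fin n → Fin 3) : Fin 3 → K :=
  ∑ p ∈ Finset.Icc 1 n, ((-1 : K) ^ (p * (n - p))) •
    ∑ σ ∈ unshuffles p n,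
      chiF K d n g σ •
        (fun j : Fin 3 => ∑ i : Fin 3,
          ell ((List.ofFn (fun t => g (σ t))).take p) i *
          ell (i :: (List.ofFn (fun t => g (σ t))).drop p) j)

lemma Jac_eq_JacF (d : Fin 3 → ℤ) (ell : List (Fin 3) → (Fin 3 → K)) (xs : List (Fin 3)) :
    Jac K d ell xs = JacF K d ell xs.length xs.get := rfl

/-- Toggle one element of the index set of a product of square-one factors. -/
lemma prod_toggle {α : Type*} [DecidableEq α] (S T : Finset α) (e : α) (f : α → K)
    (hf : f e * f e = 1) (he : e ∈ T ↔ e ∉ S) (hrest : ∀ x, x ≠ e → (x ∈ T ↔ x ∈ S)) :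
    ∏ x ∈ T, f x = f e * ∏ x ∈ S, f x := by
  by_cases hS : e ∈ S
  · have hT : T = S.erase e := by
      ext x
      by_cases hx : x = e
      · subst hx; simp [he, hS]
      · simp [hrest x hx, Finset.mem_erase, hx]
    have h2 := Finset.mul_prod_erase S f hS
    rw [hT]
    calc ∏ x ∈ S.erase e, f x = (f e * f e) * ∏ x ∈ S.erase e, f x := by rw [hf, one_mul]
    _ = f e * ∏ x ∈ S, f x := by rw [mul_assoc, h2]
  · have hT : T = insert e S := by
      ext x
      by_cases hx : x = e
      · subst hx; simp [he, hS]
      · simp [hrest x hx, hx]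
    rw [hT, Finset.prod_insert hS]

/-- An adjacent transposition preserves relative order except on the swapped pair. -/
lemma swap_lt_iff {n : ℕ} {a b : Fin n} (hab : (a:ℕ)+1 = b) {x y : Fin n}
    (h1 : ¬(x = a ∧ y = b)) (h2 : ¬(x = b ∧ y = a)) :
    Equiv.swap a b x < Equiv.swap a b y ↔ x < y := by
  rw [Equiv.swap_apply_def, Equiv.swap_apply_def]
  simp only [Fin.lt_def]
  split_ifs <;> simp only [Fin.ext_iff, not_and] at * <;> omega

end JacAux
namespace JacAux

variable {K : Type*} [Field K]

lemma chiF_kk {n : ℕ} (g : Fin n → Fin 3) (σ : Perm (Fin n)) :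
    chiF K ![0,1,2] n g σ = ((Perm.sign σ : ℤ) : K) *
      ∏ p ∈ Finset.univ.filter
        (fun p : Fin n × Fin n => p.1 < p.2 ∧ σ p.2 < σ p.1),
        kk K (g (σ p.1)) (g (σ p.2)) := by
  unfold chiF
  exact congrArg _ (Finset.prod_congr rfl fun p _ => ksign_eq _ _)

lemma ssF_kk {n : ℕ} (g : Fin n → Fin 3) :
    ssF K ![0,1,2] n g =
      ∏ p ∈ Finset.univ.filter
        (fun p : Fin n × Fin n => p.1 < p.2 ∧ g p.2 < g p.1),
        (-(kk K (g p.1) (g p.2))) := by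
  unfold ssF
  exact Finset.prod_congr rfl fun p _ => by rw [ksign_eq]

lemma sign_swap_mul {n : ℕ} {a b : Fin n} (hne : a ≠ b) (σ : Perm (Fin n)) :
    ((Perm.sign (Equiv.swap a b * σ) : ℤ) : K) = -((Perm.sign σ : ℤ) : K) := by
  rw [Perm.sign_mul, Perm.sign_swap hne]
  push_cast
  ring

lemma sign_mul_swap {n : ℕ} {a b : Fin n} (hne : a ≠ b) (σ : Perm (Fin n)) :
    ((Perm.sign (σ * Equiv.swap a b) : ℤ) : K) = -((Perm.sign σ : ℤ) : K) := by
  rw [Perm.sign_mul, Perm.sign_swap hne]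
  push_cast
  ring

/-- Lemma A: effect of composing with an adjacent transposition on the left. -/
lemma chiF_swap_mul {n : ℕ} (g : Fin n → Fin 3) {a b : Fin n} (hab : (a:ℕ)+1 = b)
    (σ : Perm (Fin n)) :
    chiF K ![0,1,2] n g (Equiv.swap a b * σ) =
      (-(kk K (g a) (g b))) * chiF K ![0,1,2] n (g ∘ Equiv.swap a b) σ := by
  have hne : a ≠ b := by intro h; rw [h] at hab; omega
  have hba : a < b := by simp only [Fin.lt_def]; omega
  set τ := Equiv.swap a b with hτdef
  rw [chiF_kk, chiF_kk]
  simp only [Perm.mul_apply, Function.comp_apply]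
  set f : Fin n × Fin n → K := fun p => kk K (g (τ (σ p.1))) (g (τ (σ p.2))) with hf
  have hinj : σ⁻¹ a ≠ σ⁻¹ b := fun h => hne (by simpa using congrArg σ h)
  have hsa : σ (σ⁻¹ a) = a := Equiv.apply_symm_apply σ a
  have hsb : σ (σ⁻¹ b) = b := Equiv.apply_symm_apply σ b
  have hτa : τ a = b := Equiv.swap_apply_left a b
  have hτb : τ b = a := Equiv.swap_apply_right a b
  have main : ∏ p ∈ Finset.univ.filter
        (fun p : Fin n × Fin n => p.1 < p.2 ∧ τ (σ p.2) < τ (σ p.1)), f p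
      = kk K (g a) (g b) *
      ∏ p ∈ Finset.univ.filter
        (fun p : Fin n × Fin n => p.1 < p.2 ∧ σ p.2 < σ p.1), f p := by
    by_cases hord : σ⁻¹ a < σ⁻¹ b
    · have := prod_toggle (K := K)
        (Finset.univ.filter (fun p : Fin n × Fin n => p.1 < p.2 ∧ σ p.2 < σ p.1))
        (Finset.univ.filter (fun p : Fin n × Fin n => p.1 < p.2 ∧ τ (σ p.2) < τ (σ p.1)))
        (σ⁻¹ a, σ⁻¹ b) f (kk_mul_self _ _) ?_ ?_
      · rw [this]
        have : f (σ⁻¹ a, σ⁻¹ b) = kk K (g a) (g b) := by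
          simp only [hf, hsa, hsb, hτa, hτb]
          exact kk_symm _ _
        rw [this]
      · simp only [Finset.mem_filter, Finset.mem_univ, true_and, hsa, hsb, hτa, hτb]
        simp [hord, hba, not_lt_of_gt hba]
        exact hord
      · intro x hx
        simp only [Finset.mem_filter, Finset.mem_univ, true_and]
        by_cases hx12 : x.1 < x.2
        · simp only [hx12, true_and]
          refine swap_lt_iff hab ?_ ?_
          · rintro ⟨ha', hb'⟩
            have h2 : x.2 = σ⁻¹ a := by rw [← ha']; simp
            have h1' : x.1 = σ⁻¹ b := by rw [← hb']; simp
            rw [h1', h2] at hx12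
            exact absurd hord (not_lt_of_gt hx12)
          · rintro ⟨hb', ha'⟩
            have h2 : x.2 = σ⁻¹ b := by rw [← hb']; simp
            have h1' : x.1 = σ⁻¹ a := by rw [← ha']; simp
            exact hx (Prod.ext h1' h2)
        · simp [hx12]
    · have hord' : σ⁻¹ b < σ⁻¹ a := lt_of_le_of_ne (not_lt.mp hord) hinj.symm
      have := prod_toggle (K := K)
        (Finset.univ.filter (fun p : Fin n × Fin n => p.1 < p.2 ∧ σ p.2 < σ p.1))
        (Finset.univ.filter (fun p : Fin n × Fin n => p.1 < p.2 ∧ τ (σ p.2) < τ (σ p.1)))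
        (σ⁻¹ b, σ⁻¹ a) f (kk_mul_self _ _) ?_ ?_
      · rw [this]
        have : f (σ⁻¹ b, σ⁻¹ a) = kk K (g a) (g b) := by
          simp only [hf, hsa, hsb, hτa, hτb]
        rw [this]
      · simp only [Finset.mem_filter, Finset.mem_univ, true_and, hsa, hsb, hτa, hτb]
        simp [hord', hba, not_lt_of_gt hba]
        exact hord'
      · intro x hx
        simp only [Finset.mem_filter, Finset.mem_univ, true_and]
        by_cases hx12 : x.1 < x.2
        · simp only [hx12, true_and]
          refine swap_lt_iff hab ?_ ?_
          · rintro ⟨ha', hb'⟩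
            have h2 : x.2 = σ⁻¹ a := by rw [← ha']; simp
            have h1' : x.1 = σ⁻¹ b := by rw [← hb']; simp
            exact hx (Prod.ext h1' h2)
          · rintro ⟨hb', ha'⟩
            have h2 : x.2 = σ⁻¹ b := by rw [← hb']; simp
            have h1' : x.1 = σ⁻¹ a := by rw [← ha']; simp
            rw [h1', h2] at hx12
            exact absurd hord' (not_lt_of_gt hx12)
        · simp [hx12]
  erw [main]
  rw [sign_swap_mul hne]
  ring
end JacAux
namespace JacAux

variable {K : Type*} [Field K]

lemma prod_split_e {α : Type*} [DecidableEq α] (T : Finset α) (e : α) (f : α → K) :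
    ∏ x ∈ T, f x = (if e ∈ T then f e else 1) * ∏ x ∈ T.erase e, f x := by
  by_cases h : e ∈ T
  · rw [if_pos h, Finset.mul_prod_erase T f h]
  · rw [if_neg h, one_mul, Finset.erase_eq_of_notMem h]

/-- generic bijection between erased inversion sets under an adjacent domain swap -/
lemma prod_erase_swap {n : ℕ} {i j : Fin n} (hij : (i:ℕ)+1 = j)
    (r : Fin n → Fin n → Prop) [DecidableRel r] (F : Fin n → Fin n → K) :
    ∏ p ∈ (Finset.univ.filter
        (fun p : Fin n × Fin n => p.1 < p.2 ∧ r (Equiv.swap i j p.1) (Equiv.swap i j p.2))).erase (i,j),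
      F (Equiv.swap i j p.1) (Equiv.swap i j p.2)
    = ∏ p ∈ (Finset.univ.filter
        (fun p : Fin n × Fin n => p.1 < p.2 ∧ r p.1 p.2)).erase (i,j),
      F p.1 p.2 := by
  have hiltj : i < j := by simp only [Fin.lt_def]; omega
  have hββ : ∀ x, Equiv.swap i j (Equiv.swap i j x) = x := fun x => Equiv.swap_apply_self i j x
  refine Finset.prod_nbij' (fun p => (Equiv.swap i j p.1, Equiv.swap i j p.2))
    (fun p => (Equiv.swap i j p.1, Equiv.swap i j p.2)) ?_ ?_ ?_ ?_ ?_
  · rintro p hp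
    rw [Finset.mem_erase, Finset.mem_filter] at hp
    obtain ⟨hpe, -, hp12, hpc⟩ := hp
    have h1 : ¬(p.1 = i ∧ p.2 = j) := fun ⟨h1', h2'⟩ => hpe (Prod.ext h1' h2')
    have h2 : ¬(p.1 = j ∧ p.2 = i) := fun ⟨h1', h2'⟩ => by
      rw [h1', h2'] at hp12; exact absurd hiltj (not_lt_of_gt hp12)
    have hlt : Equiv.swap i j p.1 < Equiv.swap i j p.2 := (swap_lt_iff hij h1 h2).mpr hp12
    rw [Finset.mem_erase, Finset.mem_filter]
    refine ⟨?_, Finset.mem_univ _, hlt, hpc⟩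
    intro hEq
    have e1 : Equiv.swap i j p.1 = i := congrArg Prod.fst hEq
    have e2 : Equiv.swap i j p.2 = j := congrArg Prod.snd hEq
    have : p.1 = j := by rw [← hββ p.1, e1, Equiv.swap_apply_left]
    have h2' : p.2 = i := by rw [← hββ p.2, e2, Equiv.swap_apply_right]
    rw [this, h2'] at hp12
    exact absurd hiltj (not_lt_of_gt hp12)
  · rintro p hp
    rw [Finset.mem_erase, Finset.mem_filter] at hp
    obtain ⟨hpe, -, hp12, hpc⟩ := hp
    have h1 : ¬(p.1 = i ∧ p.2 = j) := fun ⟨h1', h2'⟩ => hpe (Prod.ext h1' h2')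
    have h2 : ¬(p.1 = j ∧ p.2 = i) := fun ⟨h1', h2'⟩ => by
      rw [h1', h2'] at hp12; exact absurd hiltj (not_lt_of_gt hp12)
    have hlt : Equiv.swap i j p.1 < Equiv.swap i j p.2 := (swap_lt_iff hij h1 h2).mpr hp12
    rw [Finset.mem_erase, Finset.mem_filter]
    refine ⟨?_, Finset.mem_univ _, hlt, by rw [hββ, hββ]; exact hpc⟩
    intro hEq
    have e1 : Equiv.swap i j p.1 = i := congrArg Prod.fst hEq
    have e2 : Equiv.swap i j p.2 = j := congrArg Prod.snd hEq
    have : p.1 = j := by rw [← hββ p.1, e1, Equiv.swap_apply_left]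
    have h2' : p.2 = i := by rw [← hββ p.2, e2, Equiv.swap_apply_right]
    rw [this, h2'] at hp12
    exact absurd hiltj (not_lt_of_gt hp12)
  · intro p _; simp [hββ]
  · intro p _; simp [hββ]
  · intro p _; rfl

end JacAux
namespace JacAux

variable {K : Type*} [Field K]

lemma kk_of_ne {x y : Fin 3} (h : x ≠ y) : kk K x y = 1 := by
  unfold kk
  rw [if_neg]
  rintro ⟨rfl, rfl⟩
  exact h rfl

private lemma neg_aux (s M k : K) (hk : k * k = 1) : -s * (1 * M) = -k * (s * (k * M)) := by
  linear_combination s * M * hk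

/-- Lemma B: effect of composing with an adjacent transposition on the right. -/
lemma chiF_mul_swap {n : ℕ} (g : Fin n → Fin 3) {i j : Fin n} (hij : (i:ℕ)+1 = j)
    (σ : Perm (Fin n)) :
    chiF K ![0,1,2] n g (σ * Equiv.swap i j) =
      (-(kk K (g (σ i)) (g (σ j)))) * chiF K ![0,1,2] n g σ := by
  have hne : i ≠ j := by intro h; rw [h] at hij; omega
  have hiltj : i < j := by simp only [Fin.lt_def]; omega
  have hσne : σ i ≠ σ j := fun h => hne (σ.injective h)
  rw [chiF_kk, chiF_kk]
  rw [show (∏ p ∈ Finset.univ.filter (fun p : Fin n × Fin n =>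
      p.1 < p.2 ∧ (σ * Equiv.swap i j) p.2 < (σ * Equiv.swap i j) p.1),
      kk K (g ((σ * Equiv.swap i j) p.1)) (g ((σ * Equiv.swap i j) p.2))) =
    ∏ p ∈ Finset.univ.filter (fun p : Fin n × Fin n =>
      p.1 < p.2 ∧ σ (Equiv.swap i j p.2) < σ (Equiv.swap i j p.1)),
      kk K (g (σ (Equiv.swap i j p.1))) (g (σ (Equiv.swap i j p.2))) from rfl]
  rw [prod_split_e (f := fun p : Fin n × Fin n =>
        kk K (g (σ (Equiv.swap i j p.1))) (g (σ (Equiv.swap i j p.2)))) _ (i,j),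
      prod_split_e (f := fun p : Fin n × Fin n => kk K (g (σ p.1)) (g (σ p.2))) _ (i,j)]
  erw [prod_erase_swap hij (fun x y => σ y < σ x) (fun x y => kk K (g (σ x)) (g (σ y)))]
  rw [sign_mul_swap hne]
  simp only [Finset.mem_filter, Finset.mem_univ, true_and, Equiv.swap_apply_left,
    Equiv.swap_apply_right, hiltj, true_and]
  rcases lt_trichotomy (σ i) (σ j) with hc | hc | hc
  · rw [if_pos hc, if_neg (not_lt_of_gt hc), kk_symm (K := K) (g (σ j)) (g (σ i))]
    ring
  · exact absurd hc hσne
  · rw [if_neg (not_lt_of_gt hc), if_pos hc]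
    exact neg_aux _ _ _ (kk_mul_self _ _)

/-- sortSign under an adjacent transposition of positions. -/
lemma ssF_swap {m : ℕ} (h : Fin m → Fin 3) {i j : Fin m} (hij : (i:ℕ)+1 = j) :
    ssF K ![0,1,2] m (h ∘ Equiv.swap i j) =
      (if h i = h j then 1 else -1) * ssF K ![0,1,2] m h := by
  have hne : i ≠ j := by intro hh; rw [hh] at hij; omega
  have hiltj : i < j := by simp only [Fin.lt_def]; omega
  rw [ssF_kk, ssF_kk]
  simp only [Function.comp_apply]
  rw [prod_split_e (f := fun p : Fin m × Fin m =>
        -(kk K (h (Equiv.swap i j p.1)) (h (Equiv.swap i j p.2)))) _ (i,j),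
      prod_split_e (f := fun p : Fin m × Fin m => -(kk K (h p.1) (h p.2))) _ (i,j),
      prod_erase_swap hij (fun x y => h y < h x) (fun x y => -(kk K (h x) (h y)))]
  simp only [Finset.mem_filter, Finset.mem_univ, true_and, Equiv.swap_apply_left,
    Equiv.swap_apply_right, hiltj, true_and]
  rcases lt_trichotomy (h i) (h j) with hc | hc | hc
  · rw [if_pos hc, if_neg (not_lt_of_gt hc), if_neg (ne_of_lt hc),
      kk_of_ne (ne_of_gt hc)]
    ring
  · rw [if_neg (show ¬ h i < h j by rw [hc]; exact lt_irrefl _),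
      if_neg (show ¬ h j < h i by rw [hc]; exact lt_irrefl _), if_pos hc]
    ring
  · rw [if_pos hc, if_neg (not_lt_of_gt hc), if_neg (ne_of_gt hc), kk_of_ne (ne_of_gt hc)]
    ring

end JacAux
namespace JacAux

variable {K : Type*} [Field K]

lemma count_ofFn {m : ℕ} (f : Fin m → Fin 3) (z : Fin 3) :
    (List.ofFn f).count z = (Finset.univ.filter fun s => f s = z).card := by
  induction m with
  | zero => simp
  | succ m ih =>
    rw [List.ofFn_succ, List.count_cons, ih (fun i => f i.succ)]
    rw [Finset.card_filter, Finset.card_filter, Fin.sum_univ_succ]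
    simp only [beq_iff_eq]
    simp [eq_comm, add_comm]

lemma count_ofFn_comp {m : ℕ} (f : Fin m → Fin 3) (π : Perm (Fin m)) (z : Fin 3) :
    (List.ofFn (f ∘ π)).count z = (List.ofFn f).count z := by
  rw [count_ofFn, count_ofFn]
  exact Finset.card_nbij' (fun s => π s) (fun s => π⁻¹ s)
    (by intro x hx; simp_all) (by intro x hx; simp_all)
    (by intro x _; simp) (by intro x _; simp)

lemma sortSign_ofFn {m : ℕ} (h : Fin m → Fin 3) :
    sortSign K ![0,1,2] (List.ofFn h) = ssF K ![0,1,2] m h := by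
  unfold sortSign ssF
  refine Finset.prod_bij' (fun p _ => (Fin.cast (List.length_ofFn (f := h)) p.1, Fin.cast (List.length_ofFn (f := h)) p.2))
    (fun p _ => (Fin.cast (List.length_ofFn (f := h)).symm p.1, Fin.cast (List.length_ofFn (f := h)).symm p.2))
    ?_ ?_ ?_ ?_ ?_
  · intro p hp
    simp only [Finset.mem_filter, Finset.mem_univ, true_and, Fin.lt_def, Fin.coe_cast] at *
    simp [List.get_ofFn] at hp ⊢
    exact hp
  · intro p hp
    simp only [Finset.mem_filter, Finset.mem_univ, true_and, Fin.lt_def, Fin.coe_cast] at *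
    simpa [List.get_ofFn] using hp
  · intro p _; simp
  · intro p _; simp
  · intro p hp
    simp only [List.get_ofFn]

lemma ksign_mul_self (z : ℤ) : ksign K z * ksign K z = 1 := by
  unfold ksign; split_ifs <;> ring

lemma sortSign_mul_self (d : Fin 3 → ℤ) (l : List (Fin 3)) :
    sortSign K d l * sortSign K d l = 1 := by
  unfold sortSign
  rw [← Finset.prod_mul_distrib]
  rw [Finset.prod_congr rfl (fun p _ => by rw [neg_mul_neg, ksign_mul_self])]
  exact Finset.prod_const_one

lemma ell_transport (a b c : ℕ → K) (l l' : List (Fin 3)) (hlen : l'.length = l.length)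
    (h0 : l'.count 0 = l.count 0) (h2 : l'.count 2 = l.count 2) :
    ell012 a b c l' = (sortSign K ![0,1,2] l' * sortSign K ![0,1,2] l) • ell012 a b c l := by
  unfold ell012
  rw [hlen, h0, h2, smul_smul, mul_assoc, sortSign_mul_self, mul_one]

lemma ellF_swap (a b c : ℕ → K) {m : ℕ} (h : Fin m → Fin 3) {i j : Fin m}
    (hij : (i:ℕ)+1 = j) :
    ell012 a b c (List.ofFn (h ∘ Equiv.swap i j)) =
      (if h i = h j then (1:K) else -1) • ell012 a b c (List.ofFn h) := by
  rw [ell_transport a b c (List.ofFn h) (List.ofFn (h ∘ Equiv.swap i j)) (by simp)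
    (count_ofFn_comp h _ 0) (count_ofFn_comp h _ 2)]
  rw [sortSign_ofFn, sortSign_ofFn, ssF_swap h hij, mul_assoc]
  rw [show ssF K ![0,1,2] m h * ssF K ![0,1,2] m h = 1 by
    rw [← sortSign_ofFn, sortSign_mul_self], mul_one]

lemma ell_two_even (a b c : ℕ → K) {z : Fin 3} (hz : z = 0 ∨ z = 2) {l : List (Fin 3)}
    (h2 : 2 ≤ l.count z) : ell012 a b c l = 0 := by
  unfold ell012
  rcases hz with rfl | rfl <;>
    { rw [if_neg, if_neg, if_neg, smul_zero] <;> rintro ⟨h1', h2'⟩ <;> omega }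

lemma take_ofFn' {α : Type*} {m : ℕ} (f : Fin m → α) (p : ℕ) (hp : p ≤ m) :
    (List.ofFn f).take p = List.ofFn (fun q : Fin p => f ⟨q.1, lt_of_lt_of_le q.2 hp⟩) := by
  refine List.ext_getElem (by simp [hp]) ?_
  intro k h1 h2
  simp [List.getElem_take, List.getElem_ofFn]

lemma drop_ofFn' {α : Type*} {m : ℕ} (f : Fin m → α) (p : ℕ) :
    (List.ofFn f).drop p = List.ofFn (fun q : Fin (m - p) => f ⟨p + q.1, by omega⟩) := by
  refine List.ext_getElem (by simp) ?_
  intro k h1 h2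
  simp [List.getElem_drop, List.getElem_ofFn]

lemma cons_ofFn {α : Type*} {m : ℕ} (x : α) (f : Fin m → α) :
    x :: List.ofFn f = List.ofFn (Fin.cons x f) := by
  rw [List.ofFn_succ]
  simp

end JacAux
namespace JacAux

lemma mem_unshuffles {p n : ℕ} {σ : Perm (Fin n)} :
    σ ∈ unshuffles p n ↔
      (∀ i j : Fin n, i < j → (j : ℕ) < p → σ i < σ j) ∧
      (∀ i j : Fin n, p ≤ (i : ℕ) → i < j → σ i < σ j) := by
  unfold unshuffles
  simp

lemma unsh_same_block {n p : ℕ} {σ : Perm (Fin n)} (hσ : σ ∈ unshuffles p n)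
    {a b : Fin n} (hab : (a:ℕ)+1 = b)
    (hblock : (((σ⁻¹ a : Fin n)) : ℕ) < p ↔ (((σ⁻¹ b : Fin n)) : ℕ) < p) :
    (((σ⁻¹ a : Fin n)) : ℕ) + 1 = (((σ⁻¹ b : Fin n)) : ℕ) ∧
    Equiv.swap a b * σ = σ * Equiv.swap (σ⁻¹ a) (σ⁻¹ b) := by
  obtain ⟨m1, m2⟩ := mem_unshuffles.mp hσ
  have hne : a ≠ b := by intro h; rw [h] at hab; omega
  have haltb : a < b := by simp only [Fin.lt_def]; omega
  set i := σ⁻¹ a with hi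
  set j := σ⁻¹ b with hj
  have hσi : σ i = a := Equiv.apply_symm_apply σ a
  have hσj : σ j = b := Equiv.apply_symm_apply σ b
  have hij : i ≠ j := fun h => hne (by rw [← hσi, ← hσj, h])
  have hiltj : i < j := by
    rcases lt_or_gt_of_ne hij with h | h
    · exact h
    · exfalso
      by_cases hc : (i : ℕ) < p
      · have := m1 j i h hc
        rw [hσi, hσj] at this
        exact absurd haltb (not_lt_of_gt this)
      · have hpj : p ≤ (j : ℕ) := by omega
        have := m2 j i hpj h
        rw [hσi, hσj] at this
        exact absurd haltb (not_lt_of_gt this)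
  have hadj : (i : ℕ) + 1 = (j : ℕ) := by
    by_contra hcon
    have hmlt : (i : ℕ) + 1 < (j : ℕ) := by
      have := hiltj
      simp only [Fin.lt_def] at this
      omega
    have hmn : (i : ℕ) + 1 < n := lt_trans hmlt j.2
    set m : Fin n := ⟨(i : ℕ) + 1, hmn⟩ with hm
    have hmval : (m : ℕ) = (i : ℕ) + 1 := rfl
    have him : i < m := by simp only [Fin.lt_def]; omega
    have hmj : m < j := by simp only [Fin.lt_def]; omega
    have hcon2 : a < σ m ∧ σ m < b := by
      by_cases hc : (j : ℕ) < p
      · constructor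
        · rw [← hσi]; exact m1 i m him (by omega)
        · rw [← hσj]; exact m1 m j hmj hc
      · have hpi : p ≤ (i : ℕ) := by omega
        constructor
        · rw [← hσi]; exact m2 i m hpi him
        · rw [← hσj]; exact m2 m j (by omega) hmj
    obtain ⟨h1, h2⟩ := hcon2
    simp only [Fin.lt_def] at h1 h2
    omega
  refine ⟨hadj, ?_⟩
  ext x
  simp only [Perm.mul_apply]
  rcases eq_or_ne x i with rfl | hxi
  · rw [hσi, Equiv.swap_apply_left, Equiv.swap_apply_left, hσj]
  · rcases eq_or_ne x j with rfl | hxj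
    · rw [hσj, Equiv.swap_apply_right, Equiv.swap_apply_right, hσi]
    · rw [Equiv.swap_apply_of_ne_of_ne hxi hxj,
        Equiv.swap_apply_of_ne_of_ne (fun h => hxi (by rw [hi, ← h]; simp))
          (fun h => hxj (by rw [hj, ← h]; simp))]

lemma unsh_diff_block {n p : ℕ} {σ : Perm (Fin n)} (hσ : σ ∈ unshuffles p n)
    {a b : Fin n} (hab : (a:ℕ)+1 = b)
    (hblock : ¬((((σ⁻¹ a : Fin n)) : ℕ) < p ↔ (((σ⁻¹ b : Fin n)) : ℕ) < p)) :
    Equiv.swap a b * σ ∈ unshuffles p n := by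
  obtain ⟨m1, m2⟩ := mem_unshuffles.mp hσ
  have hne : a ≠ b := by intro h; rw [h] at hab; omega
  have haltb : a < b := by simp only [Fin.lt_def]; omega
  have key : ∀ x y : Fin n, x < y → ((y:ℕ) < p ∧ (x:ℕ) < p ∨ p ≤ (x:ℕ)) →
      Equiv.swap a b (σ x) < Equiv.swap a b (σ y) := by
    intro x y hxy hcase
    have hσlt : σ x < σ y := by
      rcases hcase with ⟨h1, _⟩ | h1
      · exact m1 x y hxy h1
      · exact m2 x y h1 hxy
    refine (swap_lt_iff hab ?_ ?_).mpr hσlt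
    · rintro ⟨ha', hb'⟩
      have hx : x = σ⁻¹ a := by rw [← ha']; simp
      have hy : y = σ⁻¹ b := by rw [← hb']; simp
      apply hblock
      rw [← hx, ← hy]
      simp only [Fin.lt_def] at hxy
      constructor <;> intro <;> rcases hcase with ⟨h1, h2⟩ | h1 <;> omega
    · rintro ⟨hb', ha'⟩
      rw [← ha', ← hb'] at haltb
      exact absurd hσlt (not_lt_of_gt haltb)
  rw [mem_unshuffles]
  constructor
  · intro x y hxy hyp
    have hxp : (x:ℕ) < p := by simp only [Fin.lt_def] at hxy; omega
    exact key x y hxy (Or.inl ⟨hyp, hxp⟩)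
  · intro x y hxp hxy
    exact key x y hxy (Or.inr hxp)

end JacAux
namespace JacAux

variable {K : Type*} [Field K]

lemma take_swap_eq {n : ℕ} (h : Fin n → Fin 3) {i j : Fin n} (hij : (i:ℕ)+1 = j) {p : ℕ}
    (hpn : p ≤ n) (hjp : (j:ℕ) < p) :
    (List.ofFn (h ∘ Equiv.swap i j)).take p =
      List.ofFn ((fun q : Fin p => h ⟨q.1, lt_of_lt_of_le q.2 hpn⟩) ∘
        Equiv.swap (⟨i.1, by omega⟩ : Fin p) (⟨j.1, hjp⟩ : Fin p)) := by
  rw [take_ofFn' _ p hpn]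
  congr 1
  funext q
  simp only [Function.comp_apply]
  congr 1
  simp only [Equiv.swap_apply_def, Fin.ext_iff, Fin.coe_castLE]
  split_ifs <;> simp_all

lemma drop_swap_fix {n : ℕ} (h : Fin n → Fin 3) {i j : Fin n} {p : ℕ}
    (hip : (i:ℕ) < p) (hjp : (j:ℕ) < p) :
    (List.ofFn (h ∘ Equiv.swap i j)).drop p = (List.ofFn h).drop p := by
  rw [drop_ofFn', drop_ofFn']
  congr 1
  funext q
  simp only [Function.comp_apply]
  congr 1
  simp only [Equiv.swap_apply_def, Fin.ext_iff]
  split_ifs <;> simp_all <;> omega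

lemma take_swap_fix {n : ℕ} (h : Fin n → Fin 3) {i j : Fin n} {p : ℕ} (hpn : p ≤ n)
    (hpi : p ≤ (i:ℕ)) (hpj : p ≤ (j:ℕ)) :
    (List.ofFn (h ∘ Equiv.swap i j)).take p = (List.ofFn h).take p := by
  rw [take_ofFn' _ p hpn, take_ofFn' _ p hpn]
  congr 1
  funext q
  simp only [Function.comp_apply]
  congr 1
  simp only [Equiv.swap_apply_def, Fin.ext_iff]
  split_ifs <;> simp_all <;> omega

lemma drop_swap_eq {n : ℕ} (h : Fin n → Fin 3) {i j : Fin n} (hij : (i:ℕ)+1 = j) {p : ℕ}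
    (hpi : p ≤ (i:ℕ)) :
    (List.ofFn (h ∘ Equiv.swap i j)).drop p =
      List.ofFn ((fun q : Fin (n-p) => h ⟨p+q.1, by omega⟩) ∘
        Equiv.swap (⟨i.1 - p, by have := i.2; omega⟩ : Fin (n-p))
          (⟨j.1 - p, by have := j.2; omega⟩ : Fin (n-p))) := by
  rw [drop_ofFn']
  congr 1
  funext q
  simp only [Function.comp_apply]
  congr 1
  simp only [Equiv.swap_apply_def, Fin.ext_iff]
  split_ifs <;> simp_all <;> omega

lemma cons_comp_swap {m : ℕ} (x : Fin 3) (f : Fin m → Fin 3) (cpt dpt : Fin m) :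
    Fin.cons x f ∘ (Equiv.swap cpt.succ dpt.succ) = Fin.cons (α := fun _ => Fin 3) x (f ∘ Equiv.swap cpt dpt) := by
  funext q
  refine Fin.cases ?_ ?_ q
  · simp only [Function.comp_apply, Fin.cons_zero]
    rw [Equiv.swap_apply_of_ne_of_ne (Fin.succ_ne_zero cpt).symm (Fin.succ_ne_zero dpt).symm]
    simp
  · intro r
    simp only [Function.comp_apply, Fin.cons_succ]
    rcases eq_or_ne r cpt with rfl | hc
    · rw [Equiv.swap_apply_left, Equiv.swap_apply_left, Fin.cons_succ]
    · rcases eq_or_ne r dpt with rfl | hd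
      · rw [Equiv.swap_apply_right, Equiv.swap_apply_right, Fin.cons_succ]
      · rw [Equiv.swap_apply_of_ne_of_ne (fun hh => hc (Fin.succ_injective _ hh))
            (fun hh => hd (Fin.succ_injective _ hh)),
          Equiv.swap_apply_of_ne_of_ne hc hd, Fin.cons_succ]

lemma two_le_count_ofFn {m : ℕ} (f : Fin m → Fin 3) (z : Fin 3) (q1 q2 : Fin m)
    (hne : q1 ≠ q2) (h1 : f q1 = z) (h2 : f q2 = z) : 2 ≤ (List.ofFn f).count z := by
  rw [count_ofFn]
  have hm1 : q1 ∈ Finset.univ.filter (fun s => f s = z) := by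
    rw [Finset.mem_filter]; exact ⟨Finset.mem_univ _, h1⟩
  have hm2 : q2 ∈ Finset.univ.filter (fun s => f s = z) := by
    rw [Finset.mem_filter]; exact ⟨Finset.mem_univ _, h2⟩
  have := Finset.one_lt_card.mpr ⟨q1, hm1, q2, hm2, hne⟩
  omega

lemma fin3_cases {x : Fin 3} (h : x ≠ 1) : x = 0 ∨ x = 2 := by
  fin_cases x <;> simp_all

end JacAux
namespace JacAux

variable {K : Type*} [Field K]

/-- The composition term in `Jac`. -/
def Tfun (K : Type*) [Field K] (ell : List (Fin 3) → Fin 3 → K) {n : ℕ} (p : ℕ)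
    (f : Fin n → Fin 3) : Fin 3 → K :=
  fun j => ∑ i : Fin 3, ell ((List.ofFn f).take p) i * ell (i :: (List.ofFn f).drop p) j

lemma T_zero (ca cb cc : ℕ → K) {n : ℕ} {f : Fin n → Fin 3} {p : ℕ} (hpn : p ≤ n)
    {z : Fin 3} (hz : z = 0 ∨ z = 2) {q1 q2 : Fin n} (hq : q1 ≠ q2)
    (h1 : f q1 = z) (h2 : f q2 = z)
    (hcase : ((q1:ℕ) < p ∧ (q2:ℕ) < p) ∨ (p ≤ (q1:ℕ) ∧ p ≤ (q2:ℕ))) :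
    Tfun K (ell012 ca cb cc) p f = 0 := by
  funext j
  unfold Tfun
  rcases hcase with ⟨ha1, ha2⟩ | ⟨ha1, ha2⟩
  · rw [take_ofFn' f p hpn]
    have hell : ell012 ca cb cc
        (List.ofFn fun q : Fin p => f ⟨q.1, lt_of_lt_of_le q.2 hpn⟩) = 0 := by
      refine ell_two_even ca cb cc hz
        (two_le_count_ofFn _ z ⟨(q1:ℕ), ha1⟩ ⟨(q2:ℕ), ha2⟩ ?_ ?_ ?_)
      · simp only [ne_eq, Fin.mk.injEq]
        exact fun hh => hq (Fin.ext hh)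
      · exact h1
      · exact h2
    refine Finset.sum_eq_zero fun i _ => ?_
    rw [hell]
    simp
  · refine Finset.sum_eq_zero fun i _ => ?_
    rw [drop_ofFn' f p, cons_ofFn]
    have hell : ell012 ca cb cc
        (List.ofFn (Fin.cons i (fun q : Fin (n-p) => f ⟨p + q.1, by omega⟩))) = 0 := by
      refine ell_two_even ca cb cc hz
        (two_le_count_ofFn _ z (⟨(q1:ℕ) - p, by have := q1.2; omega⟩ : Fin (n-p)).succ
          (⟨(q2:ℕ) - p, by have := q2.2; omega⟩ : Fin (n-p)).succ ?_ ?_ ?_)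
      · simp only [ne_eq, Fin.succ_inj, Fin.mk.injEq]
        intro hh
        apply hq
        apply Fin.ext
        omega
      · rw [Fin.cons_succ]
        exact (congrArg f (Fin.ext (by simp; omega))).trans h1
      · rw [Fin.cons_succ]
        exact (congrArg f (Fin.ext (by simp; omega))).trans h2
    rw [hell]
    simp

end JacAux
namespace JacAux

variable {K : Type*} [Field K]

lemma T_swap_factor (ca cb cc : ℕ → K) {n : ℕ} (f : Fin n → Fin 3) {i j : Fin n}
    (hij : (i:ℕ)+1 = j) {p : ℕ} (hpn : p ≤ n)
    (hcase : (j:ℕ) < p ∨ p ≤ (i:ℕ)) :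
    Tfun K (ell012 ca cb cc) p (f ∘ Equiv.swap i j) =
      (if f i = f j then (1:K) else -1) • Tfun K (ell012 ca cb cc) p f := by
  funext j'
  unfold Tfun
  rcases hcase with hjp | hpi
  · have hip : (i:ℕ) < p := by omega
    rw [take_swap_eq f hij hpn hjp, drop_swap_fix f hip hjp]
    rw [ellF_swap ca cb cc (fun q : Fin p => f ⟨q.1, lt_of_lt_of_le q.2 hpn⟩)
      (show (((⟨(i:ℕ), hip⟩ : Fin p)):ℕ)+1 = (((⟨(j:ℕ), hjp⟩ : Fin p)):ℕ) from hij)]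
    rw [← take_ofFn' f p hpn]
    have hci : ∀ (hh1 : (i:ℕ) < p) (hh2 : (((⟨(i:ℕ), hh1⟩ : Fin p)):ℕ) < n),
        f ⟨(((⟨(i:ℕ), hh1⟩ : Fin p)):ℕ), hh2⟩ = f i := fun _ _ => rfl
    have hcj : ∀ (hh1 : (j:ℕ) < p) (hh2 : (((⟨(j:ℕ), hh1⟩ : Fin p)):ℕ) < n),
        f ⟨(((⟨(j:ℕ), hh1⟩ : Fin p)):ℕ), hh2⟩ = f j := fun _ _ => rfl
    rw [hci, hcj]
    simp only [Pi.smul_apply, smul_eq_mul, Finset.mul_sum]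
    exact Finset.sum_congr rfl fun i₀ _ => by ring
  · have hpj : p ≤ (j:ℕ) := by omega
    rw [take_swap_fix f hpn hpi hpj, drop_swap_eq f hij hpi]
    simp only [Pi.smul_apply, smul_eq_mul, Finset.mul_sum]
    refine Finset.sum_congr rfl fun i₀ _ => ?_
    simp only [cons_ofFn]
    rw [show (Fin.cons (α := fun _ => Fin 3) i₀ ((fun q : Fin (n-p) => f ⟨p + q.1, by omega⟩) ∘
          Equiv.swap (⟨(i:ℕ) - p, by have := i.2; omega⟩ : Fin (n-p))
            (⟨(j:ℕ) - p, by have := j.2; omega⟩ : Fin (n-p))))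
        = (Fin.cons (α := fun _ => Fin 3) i₀ (fun q : Fin (n-p) => f ⟨p + q.1, by omega⟩)) ∘
          Equiv.swap (⟨(i:ℕ) - p, by have := i.2; omega⟩ : Fin (n-p)).succ
            (⟨(j:ℕ) - p, by have := j.2; omega⟩ : Fin (n-p)).succ
      from (cons_comp_swap i₀ _ _ _).symm]
    rw [ellF_swap ca cb cc (Fin.cons i₀ (fun q : Fin (n-p) => f ⟨p + q.1, by omega⟩))
      (show (((⟨(i:ℕ) - p, by have := i.2; omega⟩ : Fin (n-p)).succ : Fin (n-p+1)):ℕ)+1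
          = (((⟨(j:ℕ) - p, by have := j.2; omega⟩ : Fin (n-p)).succ : Fin (n-p+1)):ℕ) by
        simp only [Fin.val_succ]
        omega)]
    rw [← cons_ofFn, ← drop_ofFn']
    simp only [Fin.cons_succ]
    have hfi : ∀ hh : p + ((i:ℕ)-p) < n, f ⟨p + ((i:ℕ)-p), hh⟩ = f i :=
      fun hh => congrArg f (Fin.ext (by simp; omega))
    have hfj : ∀ hh : p + ((j:ℕ)-p) < n, f ⟨p + ((j:ℕ)-p), hh⟩ = f j :=
      fun hh => congrArg f (Fin.ext (by simp; omega))
    rw [hfi, hfj]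
    simp only [Pi.smul_apply, smul_eq_mul]
    ring

end JacAux
namespace JacAux

variable {K : Type*} [Field K]

lemma term_same_block (ca cb cc : ℕ → K) {n p : ℕ} (hpn : p ≤ n) (g : Fin n → Fin 3)
    {u v : Fin n} (huv : (u:ℕ)+1 = v) {σ : Perm (Fin n)} (hσ : σ ∈ unshuffles p n)
    (hblock : (((σ⁻¹ u : Fin n)):ℕ) < p ↔ (((σ⁻¹ v : Fin n)):ℕ) < p) :
    chiF K ![0,1,2] n g (Equiv.swap u v * σ) •
        Tfun K (ell012 ca cb cc) p (fun t => g ((Equiv.swap u v * σ) t))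
      = chiF K ![0,1,2] n g σ • Tfun K (ell012 ca cb cc) p (fun t => g (σ t)) := by
  obtain ⟨hadj, hfact⟩ := unsh_same_block hσ huv hblock
  rw [hfact]
  have hfun : (fun t => g ((σ * Equiv.swap (σ⁻¹ u) (σ⁻¹ v)) t))
      = ((fun t => g (σ t)) ∘ Equiv.swap (σ⁻¹ u) (σ⁻¹ v)) := rfl
  rw [hfun, chiF_mul_swap g hadj σ, show σ (σ⁻¹ u) = u from Equiv.apply_symm_apply σ u,
    show σ (σ⁻¹ v) = v from Equiv.apply_symm_apply σ v]
  set f : Fin n → Fin 3 := fun t => g (σ t) with hfdef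
  have hfi : f (σ⁻¹ u) = g u := by rw [hfdef]; simp
  have hfj : f (σ⁻¹ v) = g v := by rw [hfdef]; simp
  have hqne : σ⁻¹ u ≠ σ⁻¹ v := by
    intro hh
    have := congrArg (fun x : Fin n => (x:ℕ)) hh
    omega
  by_cases hee : g u = g v ∧ g u ≠ 1
  · obtain ⟨heq, hne1⟩ := hee
    have hz := fin3_cases hne1
    have hcase2 : ((((σ⁻¹ u : Fin n)):ℕ) < p ∧ (((σ⁻¹ v : Fin n)):ℕ) < p) ∨
        (p ≤ (((σ⁻¹ u : Fin n)):ℕ) ∧ p ≤ (((σ⁻¹ v : Fin n)):ℕ)) := by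
      by_cases hc : (((σ⁻¹ u : Fin n)):ℕ) < p
      · exact Or.inl ⟨hc, hblock.mp hc⟩
      · exact Or.inr ⟨by omega, by have := fun hv => hc (hblock.mpr hv); omega⟩
    rw [T_zero ca cb cc hpn hz hqne
        (q1 := σ⁻¹ u) (q2 := σ⁻¹ v)
        (by simp only [Function.comp_apply, Equiv.swap_apply_left]; rw [hfj, ← heq])
        (by simp only [Function.comp_apply, Equiv.swap_apply_right]; rw [hfi])
        hcase2,
      T_zero ca cb cc hpn hz hqne (q1 := σ⁻¹ u) (q2 := σ⁻¹ v)
        (by rw [hfi]) (by rw [hfj, ← heq]) hcase2]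
    simp
  · have hcase : (((σ⁻¹ v : Fin n)):ℕ) < p ∨ p ≤ (((σ⁻¹ u : Fin n)):ℕ) := by
      by_cases hc : (((σ⁻¹ u : Fin n)):ℕ) < p
      · exact Or.inl (hblock.mp hc)
      · exact Or.inr (by omega)
    rw [T_swap_factor ca cb cc f hadj hpn hcase, hfi, hfj, smul_smul]
    congr 1
    by_cases hgg : g u = g v
    · have h1 : g u = 1 := not_not.mp ((not_and.mp hee) hgg)
      rw [if_pos hgg, mul_one]
      have hkk : kk K (g u) (g v) = -1 := by
        unfold kk
        rw [if_pos ⟨h1, hgg ▸ h1⟩]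
      rw [hkk]
      ring
    · rw [if_neg hgg, kk_of_ne hgg]
      ring

lemma sum_unsh (ca cb cc : ℕ → K) {n p : ℕ} (hpn : p ≤ n) (g : Fin n → Fin 3)
    {u v : Fin n} (huv : (u:ℕ)+1 = v) :
    ∑ σ ∈ unshuffles p n, chiF K ![0,1,2] n g (Equiv.swap u v * σ) •
        Tfun K (ell012 ca cb cc) p (fun t => g ((Equiv.swap u v * σ) t))
      = ∑ σ ∈ unshuffles p n, chiF K ![0,1,2] n g σ •
        Tfun K (ell012 ca cb cc) p (fun t => g (σ t)) := by
  rw [← Finset.sum_filter_add_sum_filter_not (unshuffles p n)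
      (fun σ => (((σ⁻¹ u : Fin n)):ℕ) < p ↔ (((σ⁻¹ v : Fin n)):ℕ) < p),
    ← Finset.sum_filter_add_sum_filter_not (unshuffles p n)
      (fun σ => (((σ⁻¹ u : Fin n)):ℕ) < p ↔ (((σ⁻¹ v : Fin n)):ℕ) < p)]
  congr 1
  · refine Finset.sum_congr rfl fun σ hσ => ?_
    rw [Finset.mem_filter] at hσ
    exact term_same_block ca cb cc hpn g huv hσ.1 hσ.2
  · have hinv : ∀ σ : Perm (Fin n),
        Equiv.swap u v * (Equiv.swap u v * σ) = σ := by
      intro σ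
      rw [← mul_assoc, Equiv.swap_mul_self, one_mul]
    have hmem : ∀ σ ∈ (unshuffles p n).filter
        (fun σ => ¬((((σ⁻¹ u : Fin n)):ℕ) < p ↔ (((σ⁻¹ v : Fin n)):ℕ) < p)),
        Equiv.swap u v * σ ∈ (unshuffles p n).filter
        (fun σ => ¬((((σ⁻¹ u : Fin n)):ℕ) < p ↔ (((σ⁻¹ v : Fin n)):ℕ) < p)) := by
      intro σ hσ
      rw [Finset.mem_filter] at hσ ⊢
      obtain ⟨h1, h2⟩ := hσ
      refine ⟨unsh_diff_block h1 huv h2, ?_⟩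
      have e1 : ((Equiv.swap u v * σ)⁻¹ : Perm (Fin n)) u = σ⁻¹ v := by
        rw [mul_inv_rev]
        simp [Equiv.swap_inv, Equiv.swap_apply_left]
      have e2 : ((Equiv.swap u v * σ)⁻¹ : Perm (Fin n)) v = σ⁻¹ u := by
        rw [mul_inv_rev]
        simp [Equiv.swap_inv, Equiv.swap_apply_right]
      rw [e1, e2]
      tauto
    refine Finset.sum_nbij' (fun σ => Equiv.swap u v * σ) (fun σ => Equiv.swap u v * σ)
      hmem hmem ?_ ?_ ?_
    · intro σ _; exact hinv σ
    · intro σ _; exact hinv σ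
    · intro σ _; rfl

/-- The central equivariance lemma: `Jac` under an adjacent transposition. -/
lemma JacF_swap (ca cb cc : ℕ → K) {n : ℕ} (g : Fin n → Fin 3) {u v : Fin n}
    (huv : (u:ℕ)+1 = v) :
    JacF K ![0,1,2] (ell012 ca cb cc) n (g ∘ Equiv.swap u v) =
      (-(kk K (g u) (g v))) • JacF K ![0,1,2] (ell012 ca cb cc) n g := by
  unfold JacF
  rw [Finset.smul_sum]
  refine Finset.sum_congr rfl fun p hp => ?_
  rw [Finset.mem_Icc] at hp
  rw [smul_comm]
  congr 1
  show (∑ σ ∈ unshuffles p n, chiF K ![0,1,2] n (g ∘ Equiv.swap u v) σ •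
        Tfun K (ell012 ca cb cc) p (fun t => (g ∘ Equiv.swap u v) (σ t)))
      = (-(kk K (g u) (g v))) • ∑ σ ∈ unshuffles p n,
          chiF K ![0,1,2] n g σ • Tfun K (ell012 ca cb cc) p (fun t => g (σ t))
  have hA : ∀ σ : Perm (Fin n), chiF K ![0,1,2] n (g ∘ Equiv.swap u v) σ
      = (-(kk K (g u) (g v))) * chiF K ![0,1,2] n g (Equiv.swap u v * σ) := by
    intro σ
    rw [chiF_swap_mul g huv σ, ← mul_assoc, neg_mul_neg, kk_mul_self, one_mul]
  calc ∑ σ ∈ unshuffles p n, chiF K ![0,1,2] n (g ∘ Equiv.swap u v) σ •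
        Tfun K (ell012 ca cb cc) p (fun t => (g ∘ Equiv.swap u v) (σ t))
      = ∑ σ ∈ unshuffles p n, (-(kk K (g u) (g v))) •
          (chiF K ![0,1,2] n g (Equiv.swap u v * σ) •
            Tfun K (ell012 ca cb cc) p (fun t => g ((Equiv.swap u v * σ) t))) := by
        refine Finset.sum_congr rfl fun σ _ => ?_
        rw [hA σ, ← smul_smul]
        rfl
    _ = (-(kk K (g u) (g v))) • ∑ σ ∈ unshuffles p n,
          chiF K ![0,1,2] n g (Equiv.swap u v * σ) •
            Tfun K (ell012 ca cb cc) p (fun t => g ((Equiv.swap u v * σ) t)) := by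
        rw [Finset.smul_sum]
    _ = (-(kk K (g u) (g v))) • ∑ σ ∈ unshuffles p n,
          chiF K ![0,1,2] n g σ • Tfun K (ell012 ca cb cc) p (fun t => g (σ t)) := by
        rw [sum_unsh ca cb cc hp.2 g huv]
  
end JacAux
namespace JacAux

variable {K : Type*} [Field K]

lemma ell_ne_zero (ca cb cc : ℕ → K) {l : List (Fin 3)} {i : Fin 3}
    (h : ell012 ca cb cc l i ≠ 0) :
    (l.count 0 = 1 ∧ l.count 2 = 0 ∧ i = 1) ∨ (l.count 0 = 0 ∧ l.count 2 = 0 ∧ i = 2) ∨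
    (l.count 0 = 1 ∧ l.count 2 = 1 ∧ i = 2) := by
  unfold ell012 at h
  split_ifs at h with h1 h2 h3
  · refine Or.inl ⟨h1.1, h1.2, ?_⟩
    by_contra hi
    simp only [Pi.smul_apply, smul_eq_mul, if_neg hi, mul_zero] at h
    exact h rfl
  · refine Or.inr (Or.inl ⟨h2.1, h2.2, ?_⟩)
    by_contra hi
    simp only [Pi.smul_apply, smul_eq_mul, if_neg hi, mul_zero] at h
    exact h rfl
  · refine Or.inr (Or.inr ⟨h3.1, h3.2, ?_⟩)
    by_contra hi
    simp only [Pi.smul_apply, smul_eq_mul, if_neg hi, mul_zero] at h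
    exact h rfl
  · simp at h

lemma JacF_zero_counts (ca cb cc : ℕ → K) {n : ℕ} (g : Fin n → Fin 3)
    (h : ¬(((List.ofFn g).count 0 = 1 ∧ (List.ofFn g).count 2 = 0) ∨
          ((List.ofFn g).count 0 = 2 ∧ (List.ofFn g).count 2 = 0) ∨
          ((List.ofFn g).count 0 = 2 ∧ (List.ofFn g).count 2 = 1))) :
    JacF K ![0,1,2] (ell012 ca cb cc) n g = 0 := by
  push_neg at h
  obtain ⟨hn1, hn2, hn3⟩ := h
  unfold JacF
  refine Finset.sum_eq_zero fun p _ => ?_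
  rw [show (∑ σ ∈ unshuffles p n,
      chiF K ![0,1,2] n g σ •
        (fun j : Fin 3 => ∑ i : Fin 3,
          ell012 ca cb cc ((List.ofFn (fun t => g (σ t))).take p) i *
          ell012 ca cb cc (i :: (List.ofFn (fun t => g (σ t))).drop p) j)) = 0 from ?_,
    smul_zero]
  refine Finset.sum_eq_zero fun σ _ => ?_
  rw [show (fun j : Fin 3 => ∑ i : Fin 3,
      ell012 ca cb cc ((List.ofFn (fun t => g (σ t))).take p) i *
      ell012 ca cb cc (i :: (List.ofFn (fun t => g (σ t))).drop p) j) = 0 from ?_, smul_zero]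
  funext j
  refine Finset.sum_eq_zero fun i _ => ?_
  by_cases hA : ell012 ca cb cc ((List.ofFn (fun t => g (σ t))).take p) i = 0
  · rw [hA, zero_mul]
  by_cases hB : ell012 ca cb cc (i :: (List.ofFn (fun t => g (σ t))).drop p) j = 0
  · rw [hB, mul_zero]
  exfalso
  have k0 : ((List.ofFn (fun t => g (σ t))).take p).count 0 +
      ((List.ofFn (fun t => g (σ t))).drop p).count 0 = (List.ofFn g).count 0 := by
    rw [← List.count_append, List.take_append_drop]
    exact count_ofFn_comp g σ 0
  have k2 : ((List.ofFn (fun t => g (σ t))).take p).count 2 +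
      ((List.ofFn (fun t => g (σ t))).drop p).count 2 = (List.ofFn g).count 2 := by
    rw [← List.count_append, List.take_append_drop]
    exact count_ofFn_comp g σ 2
  have cA := ell_ne_zero ca cb cc hA
  have cB := ell_ne_zero ca cb cc hB
  rcases cA with ⟨a0, a2, rfl⟩ | ⟨a0, a2, rfl⟩ | ⟨a0, a2, rfl⟩ <;>
    rcases cB with ⟨b0, b2, -⟩ | ⟨b0, b2, -⟩ | ⟨b0, b2, -⟩ <;>
    simp only [List.count_cons, beq_iff_eq,
      show ((0:Fin 3) = 1) = False by decide, show ((2:Fin 3) = 1) = False by decide,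
      show ((0:Fin 3) = 2) = False by decide, show ((2:Fin 3) = 2) = True by decide,
      show ((1:Fin 3) = 0) = False by decide, show ((1:Fin 3) = 2) = False by decide,
      show ((2:Fin 3) = 0) = False by decide,
      if_true, if_false, add_zero] at b0 b2 <;>
    omega

end JacAux
namespace JacAux

variable {K : Type*} [Field K]

lemma JacF_congr (d : Fin 3 → ℤ) (ell : List (Fin 3) → Fin 3 → K) {m n : ℕ} (h : m = n)
    (g : Fin n → Fin 3) (g' : Fin m → Fin 3)
    (hg : ∀ s : Fin m, g' s = g (Fin.cast h s)) :
    JacF K d ell m g' = JacF K d ell n g := by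
  subst h
  have : g' = g := funext fun s => (hg s).trans (congrArg g (Fin.ext rfl))
  rw [this]

lemma kk00 : kk K (0 : Fin 3) (0 : Fin 3) = 1 := by
  unfold kk
  rw [if_neg]
  rintro ⟨hh, -⟩
  exact absurd hh (by decide)

lemma JacF_two_zeros [CharZero K] (ca cb cc : ℕ → K) {n : ℕ} :
    ∀ (dgap : ℕ) (g : Fin n → Fin 3) (q1 q2 : Fin n), (q2:ℕ) = (q1:ℕ) + dgap + 1 →
      g q1 = 0 → g q2 = 0 → JacF K ![0,1,2] (ell012 ca cb cc) n g = 0 := by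
  intro dgap
  induction dgap with
  | zero =>
    intro g q1 q2 hq h1 h2
    have hadj : (q1:ℕ)+1 = (q2:ℕ) := by omega
    have hgt : g ∘ Equiv.swap q1 q2 = g := by
      funext s
      rcases eq_or_ne s q1 with rfl | hs1
      · simp only [Function.comp_apply, Equiv.swap_apply_left]
        rw [h1, h2]
      · rcases eq_or_ne s q2 with rfl | hs2
        · simp only [Function.comp_apply, Equiv.swap_apply_right]
          rw [h1, h2]
        · simp only [Function.comp_apply, Equiv.swap_apply_of_ne_of_ne hs1 hs2]
    have hsw := JacF_swap ca cb cc g hadj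
    rw [hgt, h1, h2, kk00] at hsw
    funext j
    have hj := congrFun hsw j
    simp only [Pi.smul_apply, smul_eq_mul, neg_mul, one_mul] at hj
    have h2x : (2:K) * (JacF K ![0,1,2] (ell012 ca cb cc) n g j) = 0 := by
      linear_combination hj
    rcases mul_eq_zero.mp h2x with hcon | hok
    · exact absurd hcon two_ne_zero
    · simpa using hok
  | succ dd ih =>
    intro g q1 q2 hq h1 h2
    have hq2n := q2.2
    have hq1n := q1.2
    set q2' : Fin n := ⟨(q1:ℕ) + dd + 1, by omega⟩ with hq2'
    have hadj : (q2':ℕ) + 1 = (q2:ℕ) := by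
      simp only [hq2']
      omega
    have hsw := JacF_swap ca cb cc g hadj
    have hne1 : q1 ≠ q2' := by
      intro hh
      have := congrArg (fun x : Fin n => (x:ℕ)) hh
      simp only [hq2'] at this
      omega
    have hne2 : q1 ≠ q2 := by
      intro hh
      have := congrArg (fun x : Fin n => (x:ℕ)) hh
      omega
    have hg1 : (g ∘ Equiv.swap q2' q2) q1 = 0 := by
      simp only [Function.comp_apply, Equiv.swap_apply_of_ne_of_ne hne1 hne2]
      exact h1
    have hg2 : (g ∘ Equiv.swap q2' q2) q2' = 0 := by
      simp only [Function.comp_apply, Equiv.swap_apply_left]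
      exact h2
    have hzero := ih (g ∘ Equiv.swap q2' q2) q1 q2' (by simp only [hq2']) hg1 hg2
    rw [hzero] at hsw
    exact (smul_eq_zero.mp hsw.symm).resolve_left (neg_kk_ne_zero _ _)

lemma JacF_single (ca cb cc : ℕ → K) {n : ℕ} (hn : 1 ≤ n)
    (hJ : Jac K ![0,1,2] (ell012 ca cb cc) ((0:Fin 3) :: List.replicate (n-1) 1) = 0) :
    ∀ (m : ℕ) (g : Fin n → Fin 3) (q : Fin n), (q:ℕ) = m → g q = 0 →
      (∀ s, s ≠ q → g s = 1) → JacF K ![0,1,2] (ell012 ca cb cc) n g = 0 := by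
  intro m
  induction m with
  | zero =>
    intro g q hq h0 h1
    have hlen : ((0:Fin 3) :: List.replicate (n-1) 1).length = n := by
      simp only [List.length_cons, List.length_replicate]
      omega
    rw [Jac_eq_JacF] at hJ
    rw [← JacF_congr ![0,1,2] (ell012 ca cb cc) hlen g
      ((0:Fin 3) :: List.replicate (n-1) 1).get ?_]
    · exact hJ
    · intro s
      rcases s with ⟨sv, hsv⟩
      match sv with
      | 0 =>
        have : Fin.cast hlen (⟨0, hsv⟩ : Fin ((0:Fin 3) :: List.replicate (n-1) 1).length) = q := by
          apply Fin.ext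
          simp [hq]
        rw [this, h0]
        rfl
      | (k+1) =>
        have hne : Fin.cast hlen (⟨k+1, hsv⟩ : Fin ((0:Fin 3) :: List.replicate (n-1) 1).length) ≠ q := by
          intro hh
          have := congrArg (fun x : Fin n => (x:ℕ)) hh
          simp [hq] at this
        rw [h1 _ hne]
        simp [List.get_eq_getElem, List.getElem_cons_succ, List.getElem_replicate]
  | succ m ih =>
    intro g q hq h0 h1
    have hqn := q.2
    set q' : Fin n := ⟨m, by omega⟩ with hq'
    have hadj : (q':ℕ)+1 = (q:ℕ) := by simp only [hq']; omega
    have hne : q' ≠ q := by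
      intro hh
      have := congrArg (fun x : Fin n => (x:ℕ)) hh
      simp only [hq'] at this
      omega
    have hsw := JacF_swap ca cb cc g hadj
    have hz := ih (g ∘ Equiv.swap q' q) q' (by simp only [hq'])
      (by simp only [Function.comp_apply, Equiv.swap_apply_left]; exact h0)
      (by
        intro s hs
        rcases eq_or_ne s q with rfl | hsq
        · simp only [Function.comp_apply, Equiv.swap_apply_right]
          exact h1 q' hne
        · simp only [Function.comp_apply, Equiv.swap_apply_of_ne_of_ne hs hsq]
          exact h1 s hsq)
    rw [hz] at hsw
    exact (smul_eq_zero.mp hsw.symm).resolve_left (neg_kk_ne_zero _ _)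

end JacAux
namespace JacAux

variable {K : Type*} [Field K]

lemma exists_two_zeros {n : ℕ} {g : Fin n → Fin 3} (h : (List.ofFn g).count 0 = 2) :
    ∃ q1 q2 : Fin n, (q1:ℕ) < (q2:ℕ) ∧ g q1 = 0 ∧ g q2 = 0 := by
  rw [count_ofFn] at h
  have h1 : 1 < (Finset.univ.filter fun s => g s = 0).card := by omega
  obtain ⟨a, ha, b, hb, hab⟩ := Finset.one_lt_card.mp h1
  rw [Finset.mem_filter] at ha hb
  rcases lt_or_gt_of_ne (fun hh : (a:ℕ) = (b:ℕ) => hab (Fin.ext hh)) with hl | hl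
  · exact ⟨a, b, hl, ha.2, hb.2⟩
  · exact ⟨b, a, hl, hb.2, ha.2⟩

lemma exists_single {n : ℕ} {g : Fin n → Fin 3} (h0 : (List.ofFn g).count 0 = 1)
    (h2 : (List.ofFn g).count 2 = 0) :
    ∃ q : Fin n, g q = 0 ∧ ∀ s, s ≠ q → g s = 1 := by
  rw [count_ofFn] at h0 h2
  obtain ⟨q, hq⟩ := Finset.card_eq_one.mp h0
  have hqm : q ∈ Finset.univ.filter fun s => g s = 0 := by
    rw [hq]; exact Finset.mem_singleton_self q
  rw [Finset.mem_filter] at hqm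
  refine ⟨q, hqm.2, fun s hs => ?_⟩
  have hs0 : g s ≠ 0 := by
    intro hh
    have hmem : s ∈ Finset.univ.filter fun s => g s = 0 := by
      rw [Finset.mem_filter]; exact ⟨Finset.mem_univ _, hh⟩
    rw [hq, Finset.mem_singleton] at hmem
    exact hs hmem
  have hs2 : g s ≠ 2 := by
    intro hh
    have hmem : s ∈ Finset.univ.filter fun s => g s = 2 := by
      rw [Finset.mem_filter]; exact ⟨Finset.mem_univ _, hh⟩
    rw [Finset.card_eq_zero.mp h2] at hmem
    exact absurd hmem (Finset.notMem_empty s)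
  have htri : ∀ x : Fin 3, x ≠ 0 → x ≠ 2 → x = 1 := by decide
  exact htri _ hs0 hs2

end JacAux
/-- For `V = V₀ ⊕ V₁ ⊕ V₂` with the operators determined by `a, b, c`
(`c₁ = 0`), `Jₙ` vanishes identically iff `Jₙ(v ⊗ w^{⊗(n-1)}) = 0`. -/
theorem stmt0 {K : Type*} [Field K] [CharZero K] (a b c : ℕ → K) (hc : c 1 = 0)
    (n : ℕ) (hn : 1 ≤ n) :
    (∀ xs : List (Fin 3), xs.length = n → Jac K ![0, 1, 2] (ell012 a b c) xs = 0) ↔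
      Jac K ![0, 1, 2] (ell012 a b c) ((0 : Fin 3) :: List.replicate (n - 1) 1) = 0 := by
  constructor
  · intro h
    exact h _ (by simp only [List.length_cons, List.length_replicate]; omega)
  · intro hJ xs hxs
    subst hxs
    rw [JacAux.Jac_eq_JacF]
    by_cases h1 : (List.ofFn xs.get).count 0 = 1 ∧ (List.ofFn xs.get).count 2 = 0
    · obtain ⟨q, hq0, hq1⟩ := JacAux.exists_single h1.1 h1.2
      exact JacAux.JacF_single a b c hn hJ (q:ℕ) xs.get q rfl hq0 hq1
    · by_cases h2 : (List.ofFn xs.get).count 0 = 2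
      · obtain ⟨q1, q2, hlt, hz1, hz2⟩ := JacAux.exists_two_zeros h2
        exact JacAux.JacF_two_zeros a b c ((q2:ℕ) - (q1:ℕ) - 1) xs.get q1 q2 (by omega) hz1 hz2
      · apply JacAux.JacF_zero_counts
        rintro (⟨hh1, hh2⟩ | ⟨hh1, hh2⟩ | ⟨hh1, hh2⟩)
        · exact h1 ⟨hh1, hh2⟩
        · exact h2 hh1
        · exact h2 hh1
end

section
/- Let (aₙ), (bₙ), (cₙ) be sequences in a field of characteristic zero with c₁ = 0. Suppose that for every n ∈ ℕ the identity Σ_{p=1}^n (−1)^{p(n−p)}(−1)ⁿ b_p [ −C(n−1, n−p)·a_{n−p+1} + C(n−1, p)·c_{n−p+1} ] = 0 holds (the L∞ condition for V₀ ⊕ V₁ ⊕ V₂). If a₁ ≠ 0, then bₙ = 0 for all n ∈ ℕ. -/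
open Finset Equiv

/-- The numerical reduction of the `n`-th generalized Jacobi identity for
`V₀ ⊕ V₁ ⊕ V₂`. -/
def Jsum {K : Type*} [Field K] (a b c : ℕ → K) (n : ℕ) : K :=
  ∑ p ∈ Finset.Icc 1 n, (-1 : K) ^ (p * (n - p)) * (-1 : K) ^ n * b p *
    (-(((n - 1).choose (n - p) : K)) * a (n - p + 1) +
      ((n - 1).choose p : K) * c (n - p + 1))

/-- If the L∞ condition for `V₀ ⊕ V₁ ⊕ V₂` holds and `a₁ ≠ 0`, then all `bₙ`
vanish. -/
theorem stmt2 {K : Type*} [Field K] [CharZero K] (a b c : ℕ → K) (hc : c 1 = 0)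
    (hJ : ∀ n : ℕ, 1 ≤ n → Jsum a b c n = 0) (ha : a 1 ≠ 0) :
    ∀ n : ℕ, 1 ≤ n → b n = 0 := by
  intro n
  induction n using Nat.strong_induction_on with
  | _ n ih =>
    intro hn
    have hJn := hJ n hn
    have hsum : Jsum a b c n = (-1 : K) ^ n * b n * (-(1 : K) * a 1) := by
      unfold Jsum
      rw [Finset.sum_eq_single n]
      · have h2 : (n - 1).choose n = 0 := Nat.choose_eq_zero_of_lt (by omega)
        simp [Nat.sub_self, h2, hc]
      · intro p hp hpn
        have hp1 := Finset.mem_Icc.mp hp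
        have : b p = 0 := ih p (by omega) hp1.1
        simp [this]
      · intro h
        exact absurd (Finset.mem_Icc.mpr ⟨hn, le_refl n⟩) h
    rw [hsum] at hJn
    have hne : (-1 : K) ^ n ≠ 0 := pow_ne_zero n (by norm_num)
    rcases mul_eq_zero.mp hJn with h | h
    · rcases mul_eq_zero.mp h with h' | h'
      · exact absurd h' hne
      · exact h'
    · exact absurd (by linear_combination -h) ha
end

section
/- Let (aₙ), (bₙ), (cₙ) be sequences in a field of characteristic zero with c₁ = 0 and a₁ = 0. Fix 1 ≤ k < n, and suppose b_p = 0 for all p < k and b_k ≠ 0. Then the identity Σ_{p=1}^n (−1)^{p(n−p)}(−1)ⁿ b_p [ −C(n−1, n−p)·a_{n−p+1} + C(n−1, p)·c_{n−p+1} ] = 0 holds if and only if a_{n−k+1} = ((n−k)/k)·c_{n−k+1} + [ Σ_{q=2}^{n−k} (−1)^{q(n−q)} b_{n−q+1} ( C(n−1, q−1)·a_q − C(n−1, q−2)·c_q ) ] / [ (−1)^{k(n−k)+n} C(n−1, n−k) b_k ]. -/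
open Finset Equiv

lemma neg_one_pow_add_two_mul {K : Type*} [Monoid K] [HasDistribNeg K] (e t : ℕ) :
    (-1 : K) ^ (e + 2 * t) = (-1) ^ e := by
  rw [pow_add, pow_mul, neg_one_sq, one_pow, mul_one]

lemma alg_iff {K : Type*} [Field K] (A Cc S s N M B kk nk : K) (hs : s ≠ 0) (hN : N ≠ 0)
    (hB : B ≠ 0) (hkk : kk ≠ 0) (hMN : kk * M = nk * N) :
    s * B * (-N * A + M * Cc) + S = 0 ↔ A = nk / kk * Cc + S / (s * N * B) := by
  have hD : s * N * B ≠ 0 := mul_ne_zero (mul_ne_zero hs hN) hB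
  have key : s * B * (-N * A + M * Cc) + S =
      (s * N * B) * (nk / kk * Cc + S / (s * N * B) - A) := by
    field_simp
    linear_combination (s * B * Cc) * hMN
  rw [key, mul_eq_zero, or_iff_right hD, sub_eq_zero, eq_comm]

/-- If `b_p = 0` for `p < k` and `b_k ≠ 0` (with `a₁ = 0`, `c₁ = 0`,
`1 ≤ k < n`), then the `n`-th Jacobi identity holds iff `a_{n-k+1}` is given by
the explicit formula. -/
theorem stmt3 {K : Type*} [Field K] [CharZero K] (a b c : ℕ → K) (hc : c 1 = 0)
    (ha1 : a 1 = 0) (k n : ℕ) (hk1 : 1 ≤ k) (hkn : k < n)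
    (hb0 : ∀ p : ℕ, p < k → b p = 0) (hbk : b k ≠ 0) :
    Jsum a b c n = 0 ↔
      a (n - k + 1) =
        ((n - k : ℕ) : K) / (k : K) * c (n - k + 1) +
        (∑ q ∈ Finset.Icc 2 (n - k), (-1 : K) ^ (q * (n - q)) * b (n - q + 1) *
            (((n - 1).choose (q - 1) : K) * a q - ((n - 1).choose (q - 2) : K) * c q)) /
          ((-1 : K) ^ (k * (n - k) + n) * ((n - 1).choose (n - k) : K) * b k) := by
  set f : ℕ → K := fun p => (-1 : K) ^ (p * (n - p)) * (-1 : K) ^ n * b p *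
    (-(((n - 1).choose (n - p) : K)) * a (n - p + 1) +
      ((n - 1).choose p : K) * c (n - p + 1)) with hf
  set g : ℕ → K := fun q => (-1 : K) ^ (q * (n - q)) * b (n - q + 1) *
    (((n - 1).choose (q - 1) : K) * a q - ((n - 1).choose (q - 2) : K) * c q) with hg
  -- Step 1: restrict the sum to `[k, n-1]`.
  have h1 : Jsum a b c n = ∑ p ∈ Finset.Icc k (n - 1), f p := by
    rw [Jsum]
    refine (Finset.sum_subset ?_ ?_).symm
    · intro p hp; simp only [Finset.mem_Icc] at *; omega
    · intro p hp hnp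
      simp only [Finset.mem_Icc] at hp hnp
      rcases lt_or_ge p k with h | h
      · simp [hf, hb0 p h]
      · have hpn : p = n := by omega
        rw [hpn]
        have hch : (n - 1).choose n = 0 := Nat.choose_eq_zero_of_lt (by omega)
        simp [hf, Nat.sub_self, ha1, hc, hch]
  -- Step 2: split off `p = k`.
  have hsplit : Finset.Icc k (n - 1) = insert k (Finset.Icc (k + 1) (n - 1)) := by
    ext x; simp only [Finset.mem_Icc, Finset.mem_insert]; omega
  have hknotmem : k ∉ Finset.Icc (k + 1) (n - 1) := by
    simp only [Finset.mem_Icc]; omega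
  -- Step 3: reindex the remaining sum by `q = n - p + 1`.
  have h3 : ∑ p ∈ Finset.Icc (k + 1) (n - 1), f p = ∑ q ∈ Finset.Icc 2 (n - k), g q := by
    refine Finset.sum_nbij' (fun p => n - p + 1) (fun q => n - q + 1) ?_ ?_ ?_ ?_ ?_
    · intro p hp; simp only [Finset.mem_Icc] at *; omega
    · intro q hq; simp only [Finset.mem_Icc] at *; omega
    · intro p hp; simp only [Finset.mem_Icc] at hp
      show n - (n - p + 1) + 1 = p; omega
    · intro q hq; simp only [Finset.mem_Icc] at hq
      show n - (n - q + 1) + 1 = q; omega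
    · intro p hp
      simp only [Finset.mem_Icc] at hp
      obtain ⟨p', rfl⟩ : ∃ p', p = p' + 1 := ⟨p - 1, by omega⟩
      obtain ⟨m, rfl⟩ : ∃ m, n = p' + 1 + m + 1 := ⟨n - p' - 2, by omega⟩
      show f (p' + 1) = g (p' + 1 + m + 1 - (p' + 1) + 1)
      rw [show p' + 1 + m + 1 - (p' + 1) + 1 = m + 2 from by omega]
      simp only [hf, hg]
      rw [show p' + 1 + m + 1 - (p' + 1) + 1 = m + 2 from by omega,
          show p' + 1 + m + 1 - (p' + 1) = m + 1 from by omega,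
          show p' + 1 + m + 1 - (m + 2) + 1 = p' + 1 from by omega,
          show p' + 1 + m + 1 - (m + 2) = p' from by omega,
          show m + 2 - 1 = m + 1 from rfl,
          show m + 2 - 2 = m from rfl,
          show p' + 1 + m + 1 - 1 = p' + m + 1 from by omega]
      have hcs : (p' + m + 1).choose (p' + 1) = (p' + m + 1).choose m := by
        rw [← Nat.choose_symm (by omega : p' + 1 ≤ p' + m + 1)]
        congr 1; omega
      rw [hcs]
      have hsign : (-1 : K) ^ ((p' + 1) * (m + 1)) * (-1 : K) ^ (p' + 1 + m + 1) =
          -(-1 : K) ^ ((m + 2) * p') := by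
        have he : (p' + 1) * (m + 1) + (p' + 1 + m + 1) = ((m + 2) * p' + 1) + 2 * (m + 1) := by
          ring
        rw [← pow_add, he, neg_one_pow_add_two_mul, pow_succ]
        ring
      rw [hsign]
      ring
  -- Final algebraic step.
  have hJ : Jsum a b c n =
      (-1 : K) ^ (k * (n - k) + n) * b k *
        (-(((n - 1).choose (n - k) : K)) * a (n - k + 1) +
          ((n - 1).choose k : K) * c (n - k + 1)) +
      ∑ q ∈ Finset.Icc 2 (n - k), (-1 : K) ^ (q * (n - q)) * b (n - q + 1) *
        (((n - 1).choose (q - 1) : K) * a q - ((n - 1).choose (q - 2) : K) * c q) := by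
    rw [h1, hsplit, Finset.sum_insert hknotmem, h3]
    simp only [hf, hg, pow_add]
  have hN : ((n - 1).choose (n - k) : K) ≠ 0 :=
    Nat.cast_ne_zero.mpr (Nat.choose_pos (by omega : n - k ≤ n - 1)).ne'
  have hs : (-1 : K) ^ (k * (n - k) + n) ≠ 0 := pow_ne_zero _ (by norm_num)
  have hkK : (k : K) ≠ 0 := Nat.cast_ne_zero.mpr (by omega)
  have hMN : (k : K) * ((n - 1).choose k : K) =
      ((n - k : ℕ) : K) * ((n - 1).choose (n - k) : K) := by
    obtain ⟨k', rfl⟩ : ∃ k', k = k' + 1 := ⟨k - 1, by omega⟩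
    have h1' : (n - 1).choose (k' + 1) * (k' + 1) = (n - 1).choose k' * (n - 1 - k') :=
      Nat.choose_succ_right_eq (n - 1) k'
    have h2' : (n - 1).choose (n - (k' + 1)) = (n - 1).choose k' := by
      rw [show n - (k' + 1) = (n - 1) - k' by omega]
      exact Nat.choose_symm (by omega)
    have h3' : n - 1 - k' = n - (k' + 1) := by omega
    rw [h3'] at h1'
    have := congrArg (fun t : ℕ => (t : K)) h1'
    push_cast at this
    rw [h2']
    push_cast
    linear_combination this
  rw [hJ]
  exact alg_iff _ _ _ _ _ _ _ _ _ hs hN hbk hkK hMN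
end

section
/- Let V = V₀ ⊕ V₁ ⊕ V₂ with one-dimensional components and structure constants (aₙ), (bₙ), (cₙ) satisfying the L₃ conditions: a₁b₁ = 0, b₁a₂ − b₁c₂ − b₂a₁ = 0, and b₁(a₃ − 2c₃) + b₂(2a₂ − c₂) + b₃a₁ = 0. Then (2a₂ − c₂)·b₂ = 0 (the condition that V is a differential graded Lie algebra) holds if and only if b₁ = 0 or b₂ = 0 or a₂ = 0. -/
open Finset Equiv

/-- An `L₃` structure on `V₀ ⊕ V₁ ⊕ V₂` is a d.g. Lie algebra iff `b₁ = 0` or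
`b₂ = 0` or `a₂ = 0`. -/
theorem stmt7 {K : Type*} [Field K] [CharZero K] (a b c : ℕ → K) (hc : c 1 = 0)
    (h1 : a 1 * b 1 = 0)
    (h2 : b 1 * a 2 - b 1 * c 2 - b 2 * a 1 = 0)
    (h3 : b 1 * (a 3 - 2 * c 3) + b 2 * (2 * a 2 - c 2) + b 3 * a 1 = 0) :
    (2 * a 2 - c 2) * b 2 = 0 ↔ (b 1 = 0 ∨ b 2 = 0 ∨ a 2 = 0) := by
  constructor
  · intro h
    by_contra hcon
    push_neg at hcon
    obtain ⟨hb1, hb2, ha2⟩ := hcon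
    have ha1 : a 1 = 0 := by
      rcases mul_eq_zero.mp h1 with h' | h'
      · exact h'
      · exact absurd h' hb1
    have hac : a 2 = c 2 := by
      have : b 1 * (a 2 - c 2) = 0 := by rw [ha1] at h2; linear_combination h2
      rcases mul_eq_zero.mp this with h' | h'
      · exact absurd h' hb1
      · exact sub_eq_zero.mp h'
    have : a 2 * b 2 = 0 := by rw [← hac] at h; linear_combination h
    rcases mul_eq_zero.mp this with h' | h'
    · exact ha2 h'
    · exact hb2 h'
  · rintro (hb1 | hb2 | ha2)
    · rw [hb1] at h2 h3
      have hba : b 2 * a 1 = 0 := by linear_combination -h2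
      rcases mul_eq_zero.mp hba with h' | h'
      · rw [h']; ring
      · rw [h'] at h3; linear_combination h3
    · rw [hb2]; ring
    · rcases mul_eq_zero.mp h1 with ha1 | hb1
      · have : b 1 * c 2 = 0 := by rw [ha1, ha2] at h2; linear_combination -h2
        rcases mul_eq_zero.mp this with hb1 | hc2
        · rw [hb1, ha1] at h3
          have : b 2 * (2 * a 2 - c 2) = 0 := by linear_combination h3
          linear_combination this
        · rw [ha2, hc2]; ring
      · rw [hb1] at h2 h3
        have hba : b 2 * a 1 = 0 := by linear_combination -h2
        rcases mul_eq_zero.mp hba with h' | h'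
        · rw [h']; ring
        · rw [h'] at h3; linear_combination h3
end

section
/- With V = V₋₁ ⊕ V₀ ⊕ V₁ (one-dimensional components u, v, w) and structure constants aₙ, bₙ, cₙ as above, Jₙ(u⊗w^{⊗(n−1)}) = Σ_{p=1}^n (−1)^{p(n−p)} C(n−1, p−1) b_p c_{n−p+1} · w. -/
open Finset Equiv

/-- The operators on `V₋₁ ⊕ V₀ ⊕ V₁` (basis `u = 0, v = 1, w = 2`, of degrees
`-1, 0, 1`) determined by constants `a, b, c`:  `lₙ(u⊗v⊗w^{n-2}) = aₙ u`,
`lₙ(u⊗w^{n-1}) = bₙ v`, `lₙ(v⊗w^{n-1}) = cₙ w`, all other values zero,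
extended skew-symmetrically. -/
def ellm {K : Type*} [Field K] (a b c : ℕ → K) (xs : List (Fin 3)) : Fin 3 → K :=
  sortSign K ![-1, 0, 1] xs •
    (if xs.count 0 = 1 ∧ xs.count 1 = 1 then
        (fun j : Fin 3 => if j = 0 then a xs.length else 0)
      else if xs.count 0 = 1 ∧ xs.count 1 = 0 then
        (fun j : Fin 3 => if j = 1 then b xs.length else 0)
      else if xs.count 0 = 0 ∧ xs.count 1 = 1 then
        (fun j : Fin 3 => if j = 2 then c xs.length else 0)
      else 0)


section AuxSign

lemma sign_eq_signAux {n : ℕ} (σ : Perm (Fin n)) : Perm.sign σ = Perm.signAux σ := by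
  rcases n with _|_|n
  · rw [Subsingleton.elim σ 1, Perm.signAux_one, map_one]
  · have : σ = 1 := Equiv.ext fun x => Fin.ext (by omega)
    rw [this, Perm.signAux_one, map_one]
  · have hsurj : Function.Surjective (MonoidHom.mk' Perm.signAux Perm.signAux_mul :
        Perm (Fin (n+2)) →* ℤˣ) := by
      intro u
      rcases Int.units_eq_one_or u with rfl | rfl
      · exact ⟨1, Perm.signAux_one _⟩
      · exact ⟨swap 0 1, Perm.signAux_swap (by simp [Fin.ext_iff])⟩
    rw [← Perm.eq_sign_of_surjective_hom hsurj]
    rfl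

lemma sign_cast_eq {K : Type*} [Field K] {n : ℕ} (σ : Perm (Fin n)) :
    ((Perm.sign σ : ℤ) : K) =
      (-1) ^ (Finset.univ.filter
        (fun p : Fin n × Fin n => p.1 < p.2 ∧ σ p.2 < σ p.1)).card := by
  rw [sign_eq_signAux]
  unfold Perm.signAux
  rw [Units.coe_prod, Int.cast_prod]
  simp only [apply_ite (fun u : ℤˣ => ((u : ℤ) : K)), Units.val_neg, Units.val_one,
    Int.cast_neg, Int.cast_one]
  rw [← Finset.prod_filter, Finset.prod_const]
  congr 1
  apply Finset.card_bij (fun x _ => ((x.2, x.1) : Fin n × Fin n))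
  · intro x hx
    rw [Finset.mem_filter] at hx ⊢
    obtain ⟨hmem, hle⟩ := hx
    have hlt := Perm.mem_finPairsLT.mp hmem
    refine ⟨Finset.mem_univ _, hlt, lt_of_le_of_ne hle ?_⟩
    intro h
    exact absurd (σ.injective h) (ne_of_gt hlt)
  · intro a ha b hb h
    obtain ⟨h1, h2⟩ := Prod.mk.injEq .. ▸ h
    exact Sigma.ext (by simp [h2]) (by simp [h1])
  · intro b hb
    rw [Finset.mem_filter] at hb
    obtain ⟨-, hlt, hslt⟩ := hb
    exact ⟨⟨b.2, b.1⟩, Finset.mem_filter.mpr ⟨Perm.mem_finPairsLT.mpr hlt, le_of_lt hslt⟩, rfl⟩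

lemma chi_eq_one {K : Type*} [Field K] (d : Fin 3 → ℤ) (xs : List (Fin 3))
    (σ : Perm (Fin xs.length)) (hodd : ∀ s, Odd (d (xs.get s))) :
    chi K d xs σ = 1 := by
  unfold chi
  rw [sign_cast_eq]
  have : ∀ x ∈ Finset.univ.filter
      (fun p : Fin xs.length × Fin xs.length => p.1 < p.2 ∧ σ p.2 < σ p.1),
      ksign K (d (xs.get (σ x.1)) * d (xs.get (σ x.2))) = -1 := by
    intro x _
    unfold ksign
    rw [if_neg (Int.not_even_iff_odd.mpr ((hodd _).mul (hodd _)))]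
  rw [Finset.prod_congr rfl this, Finset.prod_const, ← pow_add]
  exact Even.neg_one_pow ⟨_, rfl⟩

lemma get_cons_replicate (x : Fin 3) (m : ℕ) (s : Fin (x :: List.replicate m 2).length) :
    (x :: List.replicate m 2).get s = if (s : ℕ) = 0 then x else 2 := by
  rcases s with ⟨i, hi⟩
  cases i with
  | zero => rfl
  | succ i =>
      simp only [List.get_eq_getElem, List.getElem_cons_succ]
      rw [List.getElem_replicate]
      simp

lemma sortSign_sorted {K : Type*} [Field K] (d : Fin 3 → ℤ) (xs : List (Fin 3))
    (h : ∀ i j : Fin xs.length, i < j → xs.get i ≤ xs.get j) :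
    sortSign K d xs = 1 := by
  unfold sortSign
  rw [Finset.filter_false_of_mem, Finset.prod_empty]
  rintro p - ⟨h1, h2⟩
  exact absurd (h _ _ h1) (not_le.mpr h2)

lemma sortSign_cons_replicate {K : Type*} [Field K] (d : Fin 3 → ℤ) (x : Fin 3) (m : ℕ) :
    sortSign K d (x :: List.replicate m 2) = 1 := by
  apply sortSign_sorted
  intro i j hij
  rw [get_cons_replicate, get_cons_replicate]
  have hj : (j : ℕ) ≠ 0 := by
    have := Fin.lt_iff_val_lt_val.mp hij; omega
  rw [if_neg hj]
  split_ifs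
  · exact Fin.le_def.mpr (by omega)
  · exact le_refl _

lemma ellm_zero_cons {K : Type*} [Field K] (a b c : ℕ → K) (m : ℕ) :
    ellm a b c ((0 : Fin 3) :: List.replicate m 2)
      = fun j : Fin 3 => if j = 1 then b (m + 1) else 0 := by
  unfold ellm
  rw [sortSign_cons_replicate]
  have h0 : ((0 : Fin 3) :: List.replicate m 2).count 0 = 1 := by
    simp [List.count_cons, List.count_replicate]
  have h1 : ((0 : Fin 3) :: List.replicate m 2).count 1 = 0 := by
    simp [List.count_cons, List.count_replicate]
  rw [h0, h1]
  norm_num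

lemma ellm_one_cons {K : Type*} [Field K] (a b c : ℕ → K) (m : ℕ) :
    ellm a b c ((1 : Fin 3) :: List.replicate m 2)
      = fun j : Fin 3 => if j = 2 then c (m + 1) else 0 := by
  unfold ellm
  rw [sortSign_cons_replicate]
  have h0 : ((1 : Fin 3) :: List.replicate m 2).count 0 = 0 := by
    simp [List.count_cons, List.count_replicate]
  have h1 : ((1 : Fin 3) :: List.replicate m 2).count 1 = 1 := by
    simp [List.count_cons, List.count_replicate]
  rw [h0, h1]
  norm_num

lemma ellm_replicate {K : Type*} [Field K] (a b c : ℕ → K) (m : ℕ) :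
    ellm a b c (List.replicate m 2) = 0 := by
  unfold ellm
  have h0 : (List.replicate m (2 : Fin 3)).count 0 = 0 := by simp [List.count_replicate]
  have h1 : (List.replicate m (2 : Fin 3)).count 1 = 0 := by simp [List.count_replicate]
  rw [h0, h1]
  norm_num

end AuxSign

section blockperm
variable {n p : ℕ}

lemma compl_card {A : Finset (Fin n)} (hA : A.card = p) : Aᶜ.card = n - p := by
  rw [Finset.card_compl, hA, Fintype.card_fin]

noncomputable def bp (hp : p ≤ n) (A : Finset (Fin n)) (hA : A.card = p) : Fin n → Fin n :=
  fun i => if h : (i : ℕ) < p then A.orderEmbOfFin hA ⟨i, h⟩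
    else Aᶜ.orderEmbOfFin (compl_card hA) ⟨(i : ℕ) - p, by have := i.isLt; omega⟩

lemma bp_inj (hp : p ≤ n) (A : Finset (Fin n)) (hA : A.card = p) :
    Function.Injective (bp hp A hA) := by
  intro i j hij
  unfold bp at hij
  split_ifs at hij with h1 h2 h2
  · have h5 := congrArg Fin.val ((A.orderEmbOfFin hA).injective hij)
    exact Fin.ext h5
  · exfalso
    have h3 := Finset.orderEmbOfFin_mem A hA ⟨i, h1⟩
    have h4 := Finset.orderEmbOfFin_mem Aᶜ (compl_card hA)
      ⟨(j : ℕ) - p, by have := j.isLt; omega⟩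
    rw [hij] at h3
    exact (Finset.mem_compl.mp h4) h3
  · exfalso
    have h3 := Finset.orderEmbOfFin_mem A hA ⟨j, h2⟩
    have h4 := Finset.orderEmbOfFin_mem Aᶜ (compl_card hA)
      ⟨(i : ℕ) - p, by have := i.isLt; omega⟩
    rw [hij] at h4
    exact (Finset.mem_compl.mp h4) h3
  · have := (Aᶜ.orderEmbOfFin (compl_card hA)).injective hij
    have h5 : (i : ℕ) - p = (j : ℕ) - p := congrArg Fin.val this
    have hi := i.isLt
    exact Fin.ext (by omega)

noncomputable def bperm (p : ℕ) (A : Finset (Fin n)) : Perm (Fin n) :=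
  if h : A.card = p ∧ p ≤ n then
    Equiv.ofBijective _ (Finite.injective_iff_bijective.mp (bp_inj h.2 A h.1))
  else 1

lemma bperm_apply (hp : p ≤ n) (A : Finset (Fin n)) (hA : A.card = p) (i : Fin n) :
    bperm p A i = bp hp A hA i := by
  rw [bperm, dif_pos ⟨hA, hp⟩]
  rfl

lemma bperm_lt (hp : p ≤ n) (A : Finset (Fin n)) (hA : A.card = p) (i : Fin n)
    (h : (i : ℕ) < p) : bperm p A i = A.orderEmbOfFin hA ⟨i, h⟩ := by
  rw [bperm_apply hp A hA, bp, dif_pos h]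

lemma bperm_ge (hp : p ≤ n) (A : Finset (Fin n)) (hA : A.card = p) (i : Fin n)
    (h : ¬ (i : ℕ) < p) : bperm p A i
      = Aᶜ.orderEmbOfFin (compl_card hA) ⟨(i : ℕ) - p, by have := i.isLt; omega⟩ := by
  rw [bperm_apply hp A hA, bp, dif_neg h]

lemma bperm_mem_unshuffles (hp : p ≤ n) (A : Finset (Fin n)) (hA : A.card = p) :
    bperm p A ∈ unshuffles p n := by
  rw [unshuffles, Finset.mem_filter]
  refine ⟨Finset.mem_univ _, ?_, ?_⟩
  · intro i j hij hjp
    have hip : (i : ℕ) < p := lt_trans (Fin.lt_iff_val_lt_val.mp hij) hjp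
    rw [bperm_lt hp A hA i hip, bperm_lt hp A hA j hjp]
    exact (A.orderEmbOfFin hA).strictMono (by exact hij)
  · intro i j hpi hij
    have hip : ¬ (i : ℕ) < p := by omega
    have hjp : ¬ (j : ℕ) < p := by
      have := Fin.lt_iff_val_lt_val.mp hij; omega
    rw [bperm_ge hp A hA i hip, bperm_ge hp A hA j hjp]
    apply (Aᶜ.orderEmbOfFin (compl_card hA)).strictMono
    have := Fin.lt_iff_val_lt_val.mp hij
    exact Fin.mk_lt_mk.mpr (by omega)

lemma bperm_zero (hp : p ≤ n) (hp1 : 1 ≤ p) (hn : 0 < n) (A : Finset (Fin n))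
    (hA : A.card = p) (h0 : (⟨0, hn⟩ : Fin n) ∈ A) :
    bperm p A ⟨0, hn⟩ = ⟨0, hn⟩ := by
  rw [bperm_lt hp A hA _ (by show 0 < p; omega)]
  apply le_antisymm
  · rw [Finset.orderEmbOfFin_zero hA (by omega)]
    exact Finset.min'_le _ _ h0
  · exact Fin.mk_le_mk.mpr (Nat.zero_le _)

end blockperm

section F
variable {n p : ℕ}

def Fset (p : ℕ) (σ : Perm (Fin n)) : Finset (Fin n) :=
  Finset.univ.filter (fun j => ((σ.symm j : Fin n) : ℕ) < p)

lemma card_filter_lt (hp : p ≤ n) :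
    (Finset.univ.filter (fun i : Fin n => (i : ℕ) < p)).card = p := by
  have : Finset.univ.filter (fun i : Fin n => (i : ℕ) < p)
      = Finset.map (Fin.castLEEmb hp) Finset.univ := by
    ext j
    simp only [Finset.mem_filter, Finset.mem_univ, true_and, Finset.mem_map,
      Fin.castLEEmb_apply]
    constructor
    · intro h; exact ⟨⟨j, h⟩, Fin.ext rfl⟩
    · rintro ⟨i, rfl⟩; exact i.isLt
  rw [this, Finset.card_map, Finset.card_univ, Fintype.card_fin]

lemma Fset_card (hp : p ≤ n) (σ : Perm (Fin n)) : (Fset p σ).card = p := by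
  have : Fset p σ = (Finset.univ.filter (fun i : Fin n => (i : ℕ) < p)).image σ := by
    ext j
    simp only [Fset, Finset.mem_filter, Finset.mem_univ, true_and, Finset.mem_image]
    constructor
    · intro h; exact ⟨σ.symm j, h, σ.apply_symm_apply j⟩
    · rintro ⟨i, hi, rfl⟩; simpa using hi
  rw [this, Finset.card_image_of_injective _ σ.injective, card_filter_lt hp]

lemma mem_Fset {σ : Perm (Fin n)} {j : Fin n} :
    j ∈ Fset p σ ↔ ((σ.symm j : Fin n) : ℕ) < p := by
  simp [Fset]

end F

section inv
variable {n p : ℕ}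

lemma Fset_bperm (hp : p ≤ n) (A : Finset (Fin n)) (hA : A.card = p) :
    Fset p (bperm p A) = A := by
  ext j
  rw [mem_Fset]
  constructor
  · intro h
    have happ : bperm p A ((bperm p A).symm j) = j := Equiv.apply_symm_apply _ _
    rw [bperm_lt hp A hA _ h] at happ
    rw [← happ]
    exact Finset.orderEmbOfFin_mem A hA _
  · intro hj
    have : j ∈ Set.range (A.orderEmbOfFin hA) := by
      rw [Finset.range_orderEmbOfFin]; exact hj
    obtain ⟨t, ht⟩ := this
    have hb : bperm p A ⟨t.1, lt_of_lt_of_le t.isLt hp⟩ = j := by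
      rw [bperm_lt hp A hA _ (by exact t.isLt)]
      rw [← ht]
    have : (bperm p A).symm j = ⟨t.1, lt_of_lt_of_le t.isLt hp⟩ := by
      rw [← hb, Equiv.symm_apply_apply]
    rw [this]
    exact t.isLt

lemma bperm_Fset (hp : p ≤ n) (σ : Perm (Fin n)) (hσ : σ ∈ unshuffles p n) :
    bperm p (Fset p σ) = σ := by
  rw [unshuffles, Finset.mem_filter] at hσ
  obtain ⟨-, hσ1, hσ2⟩ := hσ
  have hA : (Fset p σ).card = p := Fset_card hp σ
  apply Equiv.ext
  intro i
  by_cases h : (i : ℕ) < p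
  · rw [bperm_lt hp _ hA i h]
    have hg : (fun t : Fin p => σ ⟨t.1, lt_of_lt_of_le t.isLt hp⟩)
        = (Fset p σ).orderEmbOfFin hA := by
      apply Finset.orderEmbOfFin_unique
      · intro t
        rw [mem_Fset, Equiv.symm_apply_apply]
        exact t.isLt
      · intro t1 t2 hlt
        exact hσ1 _ _ (Fin.mk_lt_mk.mpr hlt) t2.isLt
    rw [← congrFun hg ⟨i.1, h⟩]
  · rw [bperm_ge hp _ hA i h]
    have hg : (fun t : Fin (n - p) => σ ⟨p + t.1, by have := t.isLt; omega⟩)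
        = (Fset p σ)ᶜ.orderEmbOfFin (compl_card hA) := by
      apply Finset.orderEmbOfFin_unique
      · intro t
        rw [Finset.mem_compl, mem_Fset, Equiv.symm_apply_apply]
        simp
      · intro t1 t2 hlt
        exact hσ2 _ _ (by simp) (Fin.mk_lt_mk.mpr (by omega))
    rw [← congrFun hg ⟨i.1 - p, by have := i.isLt; omega⟩]
    congr 1
    simp only []
    congr 1
    omega

lemma card_unshuffles_fix (hn : 0 < n) (hp1 : 1 ≤ p) (hp : p ≤ n) :
    ((unshuffles p n).filter (fun σ => σ ⟨0, hn⟩ = ⟨0, hn⟩)).card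
      = (n - 1).choose (p - 1) := by
  have step1 : ((unshuffles p n).filter (fun σ => σ ⟨0, hn⟩ = ⟨0, hn⟩)).card
      = ((Finset.powersetCard p (Finset.univ : Finset (Fin n))).filter
          (fun A => (⟨0, hn⟩ : Fin n) ∈ A)).card := by
    apply Finset.card_nbij' (Fset p) (bperm p)
    · intro σ hσ
      rw [Finset.mem_coe, Finset.mem_filter] at hσ
      obtain ⟨hu, h0⟩ := hσ
      rw [Finset.mem_coe, Finset.mem_filter, Finset.mem_powersetCard]
      refine ⟨⟨Finset.subset_univ _, Fset_card hp σ⟩, ?_⟩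
      rw [mem_Fset]
      have : σ.symm ⟨0, hn⟩ = ⟨0, hn⟩ := by
        rw [Equiv.symm_apply_eq]; exact h0.symm
      rw [this]
      exact hp1
    · intro A hA
      rw [Finset.mem_coe, Finset.mem_filter, Finset.mem_powersetCard] at hA
      obtain ⟨⟨-, hcard⟩, h0⟩ := hA
      rw [Finset.mem_coe, Finset.mem_filter]
      exact ⟨bperm_mem_unshuffles hp A hcard, bperm_zero hp hp1 hn A hcard h0⟩
    · intro σ hσ
      rw [Finset.mem_coe, Finset.mem_filter] at hσ
      exact bperm_Fset hp σ hσ.1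
    · intro A hA
      rw [Finset.mem_coe, Finset.mem_filter, Finset.mem_powersetCard] at hA
      exact Fset_bperm hp A hA.1.2
  rw [step1]
  have step2 : ((Finset.powersetCard p (Finset.univ : Finset (Fin n))).filter
      (fun A => (⟨0, hn⟩ : Fin n) ∈ A)).card
      = (Finset.powersetCard (p - 1)
          ((Finset.univ : Finset (Fin n)).erase ⟨0, hn⟩)).card := by
    apply Finset.card_nbij' (fun A => A.erase ⟨0, hn⟩) (fun S => insert ⟨0, hn⟩ S)
    · intro A hA
      rw [Finset.mem_coe, Finset.mem_filter, Finset.mem_powersetCard] at hA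
      obtain ⟨⟨-, hcard⟩, h0⟩ := hA
      rw [Finset.mem_coe, Finset.mem_powersetCard]
      constructor
      · exact Finset.erase_subset_erase _ (Finset.subset_univ _)
      · rw [Finset.card_erase_of_mem h0, hcard]
    · intro S hS
      rw [Finset.mem_coe, Finset.mem_powersetCard] at hS
      obtain ⟨hsub, hcard⟩ := hS
      have h0S : (⟨0, hn⟩ : Fin n) ∉ S := by
        intro h
        exact (Finset.mem_erase.mp (hsub h)).1 rfl
      rw [Finset.mem_coe, Finset.mem_filter, Finset.mem_powersetCard]
      refine ⟨⟨Finset.subset_univ _, ?_⟩, Finset.mem_insert_self _ _⟩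
      rw [Finset.card_insert_of_notMem h0S, hcard]
      omega
    · intro A hA
      rw [Finset.mem_coe, Finset.mem_filter] at hA
      exact Finset.insert_erase hA.2
    · intro S hS
      rw [Finset.mem_coe, Finset.mem_powersetCard] at hS
      apply Finset.erase_insert
      intro h
      exact (Finset.mem_erase.mp (hS.1 h)).1 rfl
  rw [step2, Finset.card_powersetCard, Finset.card_erase_of_mem (Finset.mem_univ _),
    Finset.card_univ, Fintype.card_fin]

end inv


section KeyLemma

variable {K : Type*} [Field K]

lemma hodd_xs (k : ℕ) (s : Fin ((0 : Fin 3) :: List.replicate k 2).length) :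
    Odd ((![-1, 0, 1] : Fin 3 → ℤ) (((0 : Fin 3) :: List.replicate k 2).get s)) := by
  rw [get_cons_replicate]
  split_ifs
  · exact ⟨-1, by norm_num⟩
  · exact ⟨0, by decide⟩

lemma key_sum (a b c : ℕ → K) (k p : ℕ) (hp1 : 1 ≤ p) (hpk : p ≤ k + 1) (j : Fin 3) :
    (∑ σ ∈ unshuffles p ((0 : Fin 3) :: List.replicate k 2).length,
      chi K ![-1, 0, 1] ((0 : Fin 3) :: List.replicate k 2) σ *
      ∑ i : Fin 3,
        ellm a b c ((List.ofFn fun t =>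
          ((0 : Fin 3) :: List.replicate k 2).get (σ t)).take p) i *
        ellm a b c (i :: (List.ofFn fun t =>
          ((0 : Fin 3) :: List.replicate k 2).get (σ t)).drop p) j)
    = (k.choose (p - 1) : K) * (b p * (if j = 2 then c (k + 1 - p + 1) else 0)) := by
  have hN : ((0 : Fin 3) :: List.replicate k 2).length = k + 1 := by simp
  have hpos : 0 < ((0 : Fin 3) :: List.replicate k 2).length := by omega
  have hpN : p ≤ ((0 : Fin 3) :: List.replicate k 2).length := by omega
  have step : ∀ σ ∈ unshuffles p ((0 : Fin 3) :: List.replicate k 2).length,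
      chi K ![-1, 0, 1] ((0 : Fin 3) :: List.replicate k 2) σ *
      (∑ i : Fin 3,
        ellm a b c ((List.ofFn fun t =>
          ((0 : Fin 3) :: List.replicate k 2).get (σ t)).take p) i *
        ellm a b c (i :: (List.ofFn fun t =>
          ((0 : Fin 3) :: List.replicate k 2).get (σ t)).drop p) j)
      = (if σ ⟨0, hpos⟩ = ⟨0, hpos⟩ then
          b p * (if j = 2 then c (k + 1 - p + 1) else 0) else 0) := by
    intro σ hσ
    rw [chi_eq_one _ _ _ (hodd_xs k), one_mul]
    have hσ' := hσ
    rw [unshuffles, Finset.mem_filter] at hσ'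
    obtain ⟨-, hσ1, hσ2⟩ := hσ'
    by_cases h0 : σ ⟨0, hpos⟩ = ⟨0, hpos⟩
    · rw [if_pos h0]
      have htake : (List.ofFn fun t =>
          ((0 : Fin 3) :: List.replicate k 2).get (σ t)).take p
          = (0 : Fin 3) :: List.replicate (p - 1) 2 := by
        apply List.ext_getElem
        · simp only [List.length_take, List.length_ofFn, List.length_cons,
            List.length_replicate]
          omega
        · intro t h1 h2
          rw [List.getElem_take, List.getElem_ofFn, get_cons_replicate]
          have ht : t < p := by
            simp only [List.length_cons, List.length_replicate] at h2
            omega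
          cases t with
          | zero =>
              rw [if_pos]
              · rfl
              · have : (⟨0, by omega⟩ : Fin ((0 : Fin 3) :: List.replicate k 2).length)
                    = ⟨0, hpos⟩ := rfl
                rw [this, h0]
          | succ t =>
              rw [if_neg]
              · simp [List.getElem_replicate]
              · intro hval
                have : σ ⟨t + 1, by omega⟩ = ⟨0, hpos⟩ := Fin.ext hval
                have := σ.injective (this.trans h0.symm)
                exact absurd (congrArg Fin.val this) (by simp)
      have hdrop : (List.ofFn fun t =>
          ((0 : Fin 3) :: List.replicate k 2).get (σ t)).drop p
          = List.replicate (((0 : Fin 3) :: List.replicate k 2).length - p) 2 := by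
        apply List.ext_getElem
        · simp only [List.length_drop, List.length_ofFn, List.length_replicate]
        · intro t h1 h2
          simp only [List.length_drop, List.length_ofFn, List.length_replicate] at h1 h2
          rw [List.getElem_drop, List.getElem_ofFn, get_cons_replicate,
            List.getElem_replicate]
          rw [if_neg]
          intro hval
          have : σ ⟨p + t, by omega⟩ = ⟨0, hpos⟩ := Fin.ext hval
          have := σ.injective (this.trans h0.symm)
          have := congrArg Fin.val this
          simp at this
          omega
      rw [htake, hdrop, ellm_zero_cons]
      rw [Fin.sum_univ_three]
      have hp' : p - 1 + 1 = p := by omega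
      rw [ellm_one_cons]
      have hlen : ((0 : Fin 3) :: List.replicate k 2).length - p + 1
          = k + 1 - p + 1 := by omega
      rw [hlen, hp']
      norm_num [Fin.ext_iff]
    · rw [if_neg h0]
      have htake : (List.ofFn fun t =>
          ((0 : Fin 3) :: List.replicate k 2).get (σ t)).take p
          = List.replicate p 2 := by
        apply List.ext_getElem
        · simp only [List.length_take, List.length_ofFn, List.length_replicate]
          omega
        · intro t h1 h2
          rw [List.getElem_take, List.getElem_ofFn, get_cons_replicate,
            List.getElem_replicate]
          have ht : t < p := by simpa using h2
          rw [if_neg]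
          intro hval
          have hts : σ ⟨t, by omega⟩ = ⟨0, hpos⟩ := Fin.ext hval
          rcases Nat.eq_zero_or_pos t with rfl | htpos
          · exact h0 hts
          · have hlt := hσ1 ⟨0, hpos⟩ ⟨t, by omega⟩ (Fin.mk_lt_mk.mpr htpos) ht
            rw [hts] at hlt
            exact absurd (Fin.lt_iff_val_lt_val.mp hlt) (by omega)
      rw [htake, ellm_replicate]
      simp
  rw [Finset.sum_congr rfl step, ← Finset.sum_filter, Finset.sum_const, nsmul_eq_mul]
  congr 1
  rw [card_unshuffles_fix hpos hp1 hpN]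
  congr 2
  omega

end KeyLemma

/-- Explicit formula for `Jₙ(u ⊗ w^{⊗(n-1)})` on `V₋₁ ⊕ V₀ ⊕ V₁`. -/
theorem stmt11 {K : Type*} [Field K] [CharZero K] (a b c : ℕ → K) (ha : a 1 = 0)
    (n : ℕ) (hn : 1 ≤ n) :
    Jac K ![-1, 0, 1] (ellm a b c) ((0 : Fin 3) :: List.replicate (n - 1) 2) =
      fun j : Fin 3 => if j = 2 then
        ∑ p ∈ Finset.Icc 1 n, (-1 : K) ^ (p * (n - p)) *
          ((n - 1).choose (p - 1) : K) * b p * c (n - p + 1)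
      else 0 := by
  obtain ⟨k, rfl⟩ : ∃ k, n = k + 1 := ⟨n - 1, by omega⟩
  clear hn ha
  simp only [Nat.add_sub_cancel]
  funext j
  rw [Jac]
  simp only [Finset.sum_apply, Pi.smul_apply, smul_eq_mul]
  have hN : ((0 : Fin 3) :: List.replicate k 2).length = k + 1 := by simp
  have main : ∀ p ∈ Finset.Icc 1 ((0 : Fin 3) :: List.replicate k 2).length,
      ((-1 : K) ^ (p * (((0 : Fin 3) :: List.replicate k 2).length - p))) *
        (∑ σ ∈ unshuffles p ((0 : Fin 3) :: List.replicate k 2).length,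
          chi K ![-1, 0, 1] ((0 : Fin 3) :: List.replicate k 2) σ *
          ∑ i : Fin 3,
            ellm a b c ((List.ofFn fun t =>
              ((0 : Fin 3) :: List.replicate k 2).get (σ t)).take p) i *
            ellm a b c (i :: (List.ofFn fun t =>
              ((0 : Fin 3) :: List.replicate k 2).get (σ t)).drop p) j)
      = ((-1 : K) ^ (p * (k + 1 - p))) *
          ((k.choose (p - 1) : K) * (b p * (if j = 2 then c (k + 1 - p + 1) else 0))) := by
    intro p hp
    rw [Finset.mem_Icc] at hp
    rw [key_sum a b c k p hp.1 (by omega), hN]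
  rw [Finset.sum_congr (by rw [hN]) main, hN]
  split_ifs with hj
  · apply Finset.sum_congr rfl
    intro p hp
    ring
  · apply Finset.sum_eq_zero
    intro p hp
    simp
end
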